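/- arXiv:1101.3635 — 5 statements merged into one kernel-verified Lean document; each statement's English description precedes it below -/
import Mathlib

section
/- Let K ⊂ ℝ² be a nondegenerate triangle with vertices a₁, a₂, a₃, area |K|, and edge vectors ℓ₁ = a₃ − a₂, ℓ₂ = a₁ − a₃, ℓ₃ = a₂ − a₁ (indices taken cyclically mod 3). Let u : ℝ² → ℝ be a quadratic polynomial with constant Hessian matrix H, and let u_I be the unique affine function agreeing with u at a₁, a₂, a₃. Then ∫_K |∇(u − u_I)(x)|² dx = (1/(48|K|)) · Σ_{i=1}^{3} c_i² |ℓ_i|², where c_i = ℓ_{i+1} · (H ℓ_{i+2}). -/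
open MeasureTheory RealInnerProductSpace

/-- The bilinear form `v ⬝ (H w)` induced by a `2 × 2` real matrix `H` on `ℝ²`. -/
noncomputable def matBilin (H : Matrix (Fin 2) (Fin 2) ℝ)
    (v w : EuclideanSpace ℝ (Fin 2)) : ℝ :=
  ∑ i : Fin 2, ∑ j : Fin 2, v i * H i j * w j


noncomputable abbrev E2 := EuclideanSpace ℝ (Fin 2)

noncomputable def vec2 (s t : ℝ) : EuclideanSpace ℝ (Fin 2) :=
  (WithLp.equiv 2 (Fin 2 → ℝ)).symm ![s, t]

@[simp] lemma vec2_apply0 (s t : ℝ) : vec2 s t 0 = s := rfl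
@[simp] lemma vec2_apply1 (s t : ℝ) : vec2 s t 1 = t := rfl

lemma hasGradientAt_quad (α β γ δ ε ζ : ℝ) (x : EuclideanSpace ℝ (Fin 2)) :
    HasGradientAt (fun y : EuclideanSpace ℝ (Fin 2) =>
      α * (y 0 * y 0) + β * (y 0 * y 1) + γ * (y 1 * y 1) + δ * y 0 + ε * y 1 + ζ)
      (vec2 (2*α*x 0 + β*x 1 + δ) (β*x 0 + 2*γ*x 1 + ε)) x := by
  rw [hasGradientAt_iff_hasFDerivAt]
  have h0 : HasFDerivAt (fun y : EuclideanSpace ℝ (Fin 2) => y 0)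
      (EuclideanSpace.proj (𝕜 := ℝ) (0 : Fin 2)) x := ((EuclideanSpace.proj (0 : Fin 2) : EuclideanSpace ℝ (Fin 2) →L[ℝ] ℝ)).hasFDerivAt
  have h1 : HasFDerivAt (fun y : EuclideanSpace ℝ (Fin 2) => y 1)
      (EuclideanSpace.proj (𝕜 := ℝ) (1 : Fin 2)) x := ((EuclideanSpace.proj (1 : Fin 2) : EuclideanSpace ℝ (Fin 2) →L[ℝ] ℝ)).hasFDerivAt
  have H := ((((((h0.mul h0).const_mul α).add ((h0.mul h1).const_mul β)).add
      ((h1.mul h1).const_mul γ)).add (h0.const_mul δ)).add (h1.const_mul ε)).add_const ζ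
  refine H.congr_fderiv ?_
  ext v
  simp [InnerProductSpace.toDual_apply_apply, PiLp.inner_apply, Fin.sum_univ_two,
    vec2_apply0, vec2_apply1]
  ring


lemma norm_vec2_sq (s t : ℝ) : ‖vec2 s t‖^2 = s^2 + t^2 := by
  rw [show vec2 s t = (vec2 s t : EuclideanSpace ℝ (Fin 2)) from rfl]
  rw [EuclideanSpace.norm_eq, Real.sq_sqrt (by positivity)]
  simp [Fin.sum_univ_two, Real.norm_eq_abs, sq_abs]

lemma norm_sq_e2 (x : EuclideanSpace ℝ (Fin 2)) : ‖x‖^2 = x 0^2 + x 1^2 := by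
  rw [EuclideanSpace.norm_eq, Real.sq_sqrt (by positivity)]
  simp [Fin.sum_univ_two, Real.norm_eq_abs, sq_abs]


lemma integral_poly3 (a c0 c1 c2 c3 : ℝ) :
    ∫ y in (0:ℝ)..a, (c0 + c1*y + c2*y^2 + c3*y^3)
      = c0*a + c1*a^2/2 + c2*a^3/3 + c3*a^4/4 := by
  have i1 : IntervalIntegrable (fun y : ℝ => c1*y) volume 0 a :=
    (continuous_const.mul continuous_id).intervalIntegrable _ _
  have i2 : IntervalIntegrable (fun y : ℝ => c2*y^2) volume 0 a :=
    (continuous_const.mul (continuous_pow 2)).intervalIntegrable _ _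
  have i3 : IntervalIntegrable (fun y : ℝ => c3*y^3) volume 0 a :=
    (continuous_const.mul (continuous_pow 3)).intervalIntegrable _ _
  rw [intervalIntegral.integral_add (((intervalIntegrable_const).add i1).add i2) i3,
      intervalIntegral.integral_add ((intervalIntegrable_const).add i1) i2,
      intervalIntegral.integral_add (intervalIntegrable_const) i1,
      intervalIntegral.integral_const, intervalIntegral.integral_const_mul,
      intervalIntegral.integral_const_mul, intervalIntegral.integral_const_mul,
      integral_id, integral_pow, integral_pow]
  push_cast
  rw [smul_eq_mul]
  ring

lemma integral_quad_tri (A B C D E F : ℝ) :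
    ∫ p in {p : ℝ × ℝ | 0 ≤ p.1 ∧ 0 ≤ p.2 ∧ p.1 + p.2 ≤ 1},
      (A + B*p.1 + C*p.2 + D*p.1^2 + E*(p.1*p.2) + F*p.2^2)
      = A/2 + (B+C)/6 + (D+F)/12 + E/24 := by
  set S : Set (ℝ × ℝ) := {p : ℝ × ℝ | 0 ≤ p.1 ∧ 0 ≤ p.2 ∧ p.1 + p.2 ≤ 1} with hSdef
  set f : ℝ × ℝ → ℝ := fun p => A + B*p.1 + C*p.2 + D*p.1^2 + E*(p.1*p.2) + F*p.2^2 with hfdef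
  have hSc : IsClosed S := by
    apply (isClosed_le continuous_const continuous_fst).inter
    exact (isClosed_le continuous_const continuous_snd).inter
      (isClosed_le (continuous_fst.add continuous_snd) continuous_const)
  have hS : MeasurableSet S := hSc.measurableSet
  have hsub : S ⊆ Set.Icc ((0:ℝ), (0:ℝ)) (1, 1) := by
    rintro ⟨x, y⟩ ⟨h1, h2, h3⟩
    simp only [Set.mem_Icc, Prod.mk_le_mk]
    refine ⟨⟨h1, h2⟩, ⟨by linarith, by linarith⟩⟩
  have hcomp : IsCompact S := isCompact_Icc.of_isClosed_subset hSc hsub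
  have hfc : Continuous f := by fun_prop
  have hint : IntegrableOn f S volume := hfc.continuousOn.integrableOn_compact hcomp
  rw [← integral_indicator hS]
  have hint2 : Integrable (S.indicator f) (volume.prod volume) := by
    rw [← Measure.volume_eq_prod]
    exact hint.integrable_indicator hS
  rw [Measure.volume_eq_prod, integral_prod _ hint2]
  have key : ∀ x : ℝ, (∫ y, S.indicator f (x, y)) =
      (Set.Icc (0:ℝ) 1).indicator
        (fun x => (A + B*x + D*x^2)*(1-x) + (C + E*x)*(1-x)^2/2 + F*(1-x)^3/3) x := by
    intro x
    by_cases hx : x ∈ Set.Icc (0:ℝ) 1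
    · have h1x : (0:ℝ) ≤ 1 - x := by linarith [hx.2]
      have hy : ∀ y : ℝ, S.indicator f (x, y) = (Set.Icc 0 (1-x)).indicator (fun y => f (x, y)) y := by
        intro y
        rw [Set.indicator_apply, Set.indicator_apply]
        have : ((x, y) ∈ S) ↔ y ∈ Set.Icc 0 (1-x) := by
          simp only [hSdef, Set.mem_setOf_eq, Set.mem_Icc]
          constructor
          · rintro ⟨-, h2, h3⟩; exact ⟨h2, by linarith⟩
          · rintro ⟨h2, h3⟩; exact ⟨hx.1, h2, by linarith⟩
        rw [if_congr this rfl rfl]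
      simp only [hy]
      rw [integral_indicator measurableSet_Icc,
          setIntegral_congr_set Ioc_ae_eq_Icc.symm,
          ← intervalIntegral.integral_of_le h1x]
      rw [Set.indicator_of_mem hx]
      rw [show (fun y => f (x, y)) = fun y => (A + B*x + D*x^2) + (C + E*x)*y + F*y^2 + 0*y^3 from
        by funext y; simp only [hfdef]; ring]
      rw [integral_poly3]
      ring
    · have : ∀ y : ℝ, S.indicator f (x, y) = 0 := by
        intro y
        apply Set.indicator_of_notMem
        simp only [hSdef, Set.mem_setOf_eq]
        rintro ⟨h1, h2, h3⟩
        have hnx : ¬(0 ≤ x ∧ x ≤ 1) := by simpa [Set.mem_Icc] using hx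
        exact hnx ⟨h1, by linarith⟩
      simp only [this, integral_zero]
      rw [Set.indicator_of_notMem hx]
  simp only [key]
  rw [integral_indicator measurableSet_Icc,
      setIntegral_congr_set Ioc_ae_eq_Icc.symm,
      ← intervalIntegral.integral_of_le (by norm_num : (0:ℝ) ≤ 1)]
  rw [show (fun x => (A + B*x + D*x^2)*(1-x) + (C + E*x)*(1-x)^2/2 + F*(1-x)^3/3) =
      fun x => (A + C/2 + F/3) + (B - A + (-C) + E/2 - F)*x + (D - B + C/2 - E + F)*x^2
        + (-D + E/2 - F/3)*x^3 from by funext x; ring]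
  rw [integral_poly3]
  ring


noncomputable def triT : Set (EuclideanSpace ℝ (Fin 2)) :=
  {t : EuclideanSpace ℝ (Fin 2) | 0 ≤ t 0 ∧ 0 ≤ t 1 ∧ t 0 + t 1 ≤ 1}

noncomputable def lmap (v w : EuclideanSpace ℝ (Fin 2)) :
    EuclideanSpace ℝ (Fin 2) →L[ℝ] EuclideanSpace ℝ (Fin 2) :=
  (EuclideanSpace.proj (0 : Fin 2)).smulRight v + (EuclideanSpace.proj (1 : Fin 2)).smulRight w

lemma lmap_apply (v w t : EuclideanSpace ℝ (Fin 2)) (i : Fin 2) :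
    lmap v w t i = t 0 * v i + t 1 * w i := by
  simp [lmap, PiLp.add_apply, PiLp.smul_apply, smul_eq_mul]

lemma lmap_det (v w : EuclideanSpace ℝ (Fin 2)) :
    (lmap v w).det = v 0 * w 1 - v 1 * w 0 := by
  have hb := (EuclideanSpace.basisFun (Fin 2) ℝ).toBasis
  rw [ContinuousLinearMap.det, ← LinearMap.det_toMatrix (EuclideanSpace.basisFun (Fin 2) ℝ).toBasis,
    Matrix.det_fin_two]
  simp [LinearMap.toMatrix_apply, lmap_apply, EuclideanSpace.basisFun_apply,
    EuclideanSpace.single_apply]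
  ring

lemma lmap_inj (v w : EuclideanSpace ℝ (Fin 2)) (hD : v 0 * w 1 - v 1 * w 0 ≠ 0)
    (p : EuclideanSpace ℝ (Fin 2)) :
    Function.Injective (fun t => p + lmap v w t) := by
  intro s t hst
  simp only at hst
  have h0 : p 0 + lmap v w s 0 = p 0 + lmap v w t 0 := by
    have := congrFun (congrArg (fun (z : EuclideanSpace ℝ (Fin 2)) (i : Fin 2) => z i) hst) 0
    simpa [PiLp.add_apply] using this
  have h1 : p 1 + lmap v w s 1 = p 1 + lmap v w t 1 := by
    have := congrFun (congrArg (fun (z : EuclideanSpace ℝ (Fin 2)) (i : Fin 2) => z i) hst) 1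
    simpa [PiLp.add_apply] using this
  rw [lmap_apply, lmap_apply] at h0 h1
  have e0 : (s 0 - t 0) * v 0 + (s 1 - t 1) * w 0 = 0 := by linarith
  have e1 : (s 0 - t 0) * v 1 + (s 1 - t 1) * w 1 = 0 := by linarith
  have hz0 : (s 0 - t 0) * (v 0 * w 1 - v 1 * w 0) = 0 := by linear_combination w 1 * e0 - w 0 * e1
  have hz1 : (s 1 - t 1) * (v 0 * w 1 - v 1 * w 0) = 0 := by linear_combination v 0 * e1 - v 1 * e0
  have hs0 : s 0 = t 0 := by
    rcases mul_eq_zero.mp hz0 with h | h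
    · linarith
    · exact absurd h hD
  have hs1 : s 1 = t 1 := by
    rcases mul_eq_zero.mp hz1 with h | h
    · linarith
    · exact absurd h hD
  ext i
  fin_cases i <;> assumption

lemma triT_convex : Convex ℝ triT := by
  have h0 : Convex ℝ {t : EuclideanSpace ℝ (Fin 2) | 0 ≤ t 0} := by
    have := (convex_Ici (0:ℝ)).linear_preimage ((EuclideanSpace.projₗ (0 : Fin 2)) : EuclideanSpace ℝ (Fin 2) →ₗ[ℝ] ℝ)
    exact this
  have h1 : Convex ℝ {t : EuclideanSpace ℝ (Fin 2) | 0 ≤ t 1} := by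
    have := (convex_Ici (0:ℝ)).linear_preimage ((EuclideanSpace.projₗ (1 : Fin 2)) : EuclideanSpace ℝ (Fin 2) →ₗ[ℝ] ℝ)
    exact this
  have h2 : Convex ℝ {t : EuclideanSpace ℝ (Fin 2) | t 0 + t 1 ≤ 1} := by
    have := (convex_Iic (1:ℝ)).linear_preimage
      (((EuclideanSpace.projₗ (0 : Fin 2)) : EuclideanSpace ℝ (Fin 2) →ₗ[ℝ] ℝ)
        + ((EuclideanSpace.projₗ (1 : Fin 2)) : EuclideanSpace ℝ (Fin 2) →ₗ[ℝ] ℝ))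
    exact this
  exact h0.inter (h1.inter h2)

lemma triT_measurable : MeasurableSet triT := by
  have : IsClosed triT := by
    have c0 : Continuous fun t : EuclideanSpace ℝ (Fin 2) => t 0 :=
      (EuclideanSpace.proj (0 : Fin 2) : EuclideanSpace ℝ (Fin 2) →L[ℝ] ℝ).continuous
    have c1 : Continuous fun t : EuclideanSpace ℝ (Fin 2) => t 1 :=
      (EuclideanSpace.proj (1 : Fin 2) : EuclideanSpace ℝ (Fin 2) →L[ℝ] ℝ).continuous
    exact (isClosed_le continuous_const c0).inter
      ((isClosed_le continuous_const c1).inter (isClosed_le (c0.add c1) continuous_const))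
  exact this.measurableSet

lemma psi_image (a : Fin 3 → EuclideanSpace ℝ (Fin 2)) :
    (fun t => a 0 + lmap (a 1 - a 0) (a 2 - a 0) t) '' triT = convexHull ℝ (Set.range a) := by
  set v := a 1 - a 0 with hv
  set w := a 2 - a 0 with hw
  set ψ : EuclideanSpace ℝ (Fin 2) → EuclideanSpace ℝ (Fin 2) := fun t => a 0 + lmap v w t with hψ
  have hψA : ∃ ψA : EuclideanSpace ℝ (Fin 2) →ᵃ[ℝ] EuclideanSpace ℝ (Fin 2), ⇑ψA = ψ := by
    refine ⟨AffineMap.mk' ψ (lmap v w).toLinearMap 0 fun p' => ?_, rfl⟩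
    simp [hψ, vsub_eq_sub, vadd_eq_add, map_zero]
    abel
  obtain ⟨ψA, hψAc⟩ := hψA
  apply Set.Subset.antisymm
  · -- image ⊆ hull
    rintro x ⟨t, ⟨ht0, ht1, hts⟩, rfl⟩
    have hw1 : (∑ i, (![1 - t 0 - t 1, t 0, t 1]) i) = 1 := by
      simp [Fin.sum_univ_three]; ring
    have := affineCombination_mem_convexHull (s := Finset.univ) (v := a)
      (w := ![1 - t 0 - t 1, t 0, t 1]) (fun i _ => by fin_cases i <;> simp <;> linarith) hw1
    have hcomb := Finset.univ.affineCombination_eq_linear_combination a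
      (![1 - t 0 - t 1, t 0, t 1]) hw1
    rw [hcomb] at this
    convert this using 1
    ext i
    show a 0 i + lmap v w t i = _
    rw [lmap_apply]
    simp [Fin.sum_univ_three, hv, hw, PiLp.add_apply, PiLp.sub_apply,
      PiLp.smul_apply, smul_eq_mul]
    try ring
  · -- hull ⊆ image
    apply convexHull_min
    · rintro x ⟨i, rfl⟩
      fin_cases i
      · refine ⟨0, by simp [triT], ?_⟩
        simp [hψ, map_zero]
      · refine ⟨EuclideanSpace.single 0 1, by simp [triT, EuclideanSpace.single_apply], ?_⟩
        ext i
        show a 0 i + lmap v w (EuclideanSpace.single 0 1) i = a 1 i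
        rw [lmap_apply]
        simp [EuclideanSpace.single_apply, hv, PiLp.sub_apply]
      · refine ⟨EuclideanSpace.single 1 1, by simp [triT, EuclideanSpace.single_apply], ?_⟩
        ext i
        show a 0 i + lmap v w (EuclideanSpace.single 1 1) i = a 2 i
        rw [lmap_apply]
        simp [EuclideanSpace.single_apply, hw, PiLp.sub_apply]
    · rw [← hψAc]
      exact triT_convex.affine_image ψA


noncomputable def e2equiv : EuclideanSpace ℝ (Fin 2) ≃ᵐ ℝ × ℝ :=
  (MeasurableEquiv.toLp 2 (Fin 2 → ℝ)).symm.trans (MeasurableEquiv.finTwoArrow)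

lemma e2equiv_mp : MeasurePreserving e2equiv volume volume :=
  (volume_preserving_finTwoArrow ℝ).comp (EuclideanSpace.volume_preserving_symm_measurableEquiv_toLp (Fin 2))

lemma setIntegral_e2_triangle (g : ℝ × ℝ → ℝ) :
    ∫ t in triT, g (t 0, t 1)
      = ∫ p in {p : ℝ × ℝ | 0 ≤ p.1 ∧ 0 ≤ p.2 ∧ p.1 + p.2 ≤ 1}, g p := by
  have h := e2equiv_mp.setIntegral_preimage_emb e2equiv.measurableEmbedding g
    {p : ℝ × ℝ | 0 ≤ p.1 ∧ 0 ≤ p.2 ∧ p.1 + p.2 ≤ 1}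
  rw [← h]
  rfl


lemma det_ne_zero (a : Fin 3 → EuclideanSpace ℝ (Fin 2)) (hind : AffineIndependent ℝ a) :
    (a 1 0 - a 0 0)*(a 2 1 - a 0 1) - (a 1 1 - a 0 1)*(a 2 0 - a 0 0) ≠ 0 := by
  intro h
  set v0 : ℝ := a 1 0 - a 0 0
  set v1 : ℝ := a 1 1 - a 0 1
  set w0 : ℝ := a 2 0 - a 0 0
  set w1 : ℝ := a 2 1 - a 0 1
  -- helper to produce a contradiction from a dependence relation
  have key : ∀ c1 c2 : ℝ, c1 * v0 + c2 * w0 = 0 → c1 * v1 + c2 * w1 = 0 →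
      (c1 = 0 ∧ c2 = 0) := by
    intro c1 c2 h0 h1
    have hsum : ∑ i : Fin 3, (![-(c1+c2), c1, c2]) i = 0 := by
      simp [Fin.sum_univ_three]
      try ring
    have hvsub : Finset.univ.weightedVSub a (![-(c1+c2), c1, c2]) = 0 := by
      rw [Finset.univ.weightedVSub_eq_linear_combination hsum]
      ext i
      have hcoord : -(c1+c2) * a 0 i + c1 * a 1 i + c2 * a 2 i = 0 := by
        fin_cases i
        · simp only [Fin.zero_eta]; linear_combination h0
        · simp only [Fin.mk_one]; linear_combination h1
      simp only [Fin.sum_univ_three, PiLp.add_apply, PiLp.smul_apply, smul_eq_mul,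
        Matrix.cons_val_zero, Matrix.cons_val_one, Matrix.head_cons, Matrix.cons_val_two,
        Matrix.tail_cons, PiLp.zero_apply]
      linear_combination hcoord
    have h1z := hind Finset.univ _ hsum hvsub 1 (Finset.mem_univ 1)
    have h2z := hind Finset.univ _ hsum hvsub 2 (Finset.mem_univ 2)
    simp at h1z h2z
    exact ⟨h1z, h2z⟩
  by_cases hv0 : v0 = 0
  · by_cases hv1 : v1 = 0
    · -- v = 0 : relation (0,1,... ) meaning a1 = a0 direction: use c1 = 1, c2 = 0
      have := key 1 0 (by rw [hv0]; ring) (by rw [hv1]; ring)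
      exact one_ne_zero this.1
    · -- use (w1, -v1)
      have := key w1 (-v1) (by nlinarith [h]) (by ring)
      exact hv1 (by linarith [neg_eq_zero.mp this.2])
  · -- use (w0, -v0)
    have := key w0 (-v0) (by ring) (by nlinarith [h])
    exact hv0 (by linarith [neg_eq_zero.mp this.2])

lemma final_algebra (p0 p1 q0 q1 r0 r1 h00 h01 h11 d0 d1 m : ℝ)
    (hm : m ≠ 0)
    (hm2 : m * m = ((q0-p0)*(r1-p1) - (q1-p1)*(r0-p0)) * ((q0-p0)*(r1-p1) - (q1-p1)*(r0-p0)))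
    (e1 : (1/2)*((p0*h00*p0 + p0*h01*p1 + p1*h01*p0 + p1*h11*p1) - (q0*h00*q0 + q0*h01*q1 + q1*h01*q0 + q1*h11*q1)) + d0*(p0-q0) + d1*(p1-q1) = 0)
    (e2 : (1/2)*((p0*h00*p0 + p0*h01*p1 + p1*h01*p0 + p1*h11*p1) - (r0*h00*r0 + r0*h01*r1 + r1*h01*r0 + r1*h11*r1)) + d0*(p0-r0) + d1*(p1-r1) = 0) :
    m * (((h00*p0+h01*p1+d0)^2 + (h01*p0+h11*p1+d1)^2)/2 + ((2*((h00*p0+h01*p1+d0)*(h00*(q0-p0)+h01*(q1-p1)) + (h01*p0+h11*p1+d1)*(h01*(q0-p0)+h11*(q1-p1)))) + (2*((h00*p0+h01*p1+d0)*(h00*(r0-p0)+h01*(r1-p1)) + (h01*p0+h11*p1+d1)*(h01*(r0-p0)+h11*(r1-p1)))))/6 + (((h00*(q0-p0)+h01*(q1-p1))^2 + (h01*(q0-p0)+h11*(q1-p1))^2) + ((h00*(r0-p0)+h01*(r1-p1))^2 + (h01*(r0-p0)+h11*(r1-p1))^2))/12 + (2*((h00*(q0-p0)+h01*(q1-p1))*(h00*(r0-p0)+h01*(r1-p1))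 + (h01*(q0-p0)+h11*(q1-p1))*(h01*(r0-p0)+h11*(r1-p1))))/24) = 1/(48*(m/2)) * (((p0-r0)*h00*(q0-p0) + (p0-r0)*h01*(q1-p1) + (p1-r1)*h01*(q0-p0) + (p1-r1)*h11*(q1-p1))^2*((r0-q0)^2+(r1-q1)^2) + ((q0-p0)*h00*(r0-q0) + (q0-p0)*h01*(r1-q1) + (q1-p1)*h01*(r0-q0) + (q1-p1)*h11*(r1-q1))^2*((p0-r0)^2+(p1-r1)^2) + ((r0-q0)*h00*(p0-r0) + (r0-q0)*h01*(p1-r1) + (r1-q1)*h01*(p0-r0) + (r1-q1)*h11*(p1-r1))^2*((q0-p0)^2+(q1-p1)^2)) := by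
  have hd0 : ((q0-p0)*(r1-p1) - (q1-p1)*(r0-p0)) * d0 = (-(1/2)*((p0*h00*p0 + p0*h01*p1 + p1*h01*p0 + p1*h11*p1) - (q0*h00*q0 + q0*h01*q1 + q1*h01*q0 + q1*h11*q1))*(p1-r1) + (1/2)*((p0*h00*p0 + p0*h01*p1 + p1*h01*p0 + p1*h11*p1) - (r0*h00*r0 + r0*h01*r1 + r1*h01*r0 + r1*h11*r1))*(p1-q1)) := by
    linear_combination (p1-r1)*e1 - (p1-q1)*e2
  have hd1 : ((q0-p0)*(r1-p1) - (q1-p1)*(r0-p0)) * d1 = ((p0-q0)*(-(1/2)*((p0*h00*p0 + p0*h01*p1 + p1*h01*p0 + p1*h11*p1) - (r0*h00*r0 + r0*h01*r1 + r1*h01*r0 + r1*h11*r1))) - (p0-r0)*(-(1/2)*((p0*h00*p0 + p0*h01*p1 + p1*h01*p0 + p1*h11*p1) - (q0*h00*q0 + q0*h01*q1 + q1*h01*q0 + q1*h11*q1)))) := by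
    linear_combination (p0-q0)*e2 - (p0-r0)*e1
  refine mul_left_cancel₀ hm ?_
  rw [show m * (1/(48*(m/2)) * (((p0-r0)*h00*(q0-p0) + (p0-r0)*h01*(q1-p1) + (p1-r1)*h01*(q0-p0) + (p1-r1)*h11*(q1-p1))^2*((r0-q0)^2+(r1-q1)^2) + ((q0-p0)*h00*(r0-q0) + (q0-p0)*h01*(r1-q1) + (q1-p1)*h01*(r0-q0) + (q1-p1)*h11*(r1-q1))^2*((p0-r0)^2+(p1-r1)^2) + ((r0-q0)*h00*(p0-r0) + (r0-q0)*h01*(p1-r1) + (r1-q1)*h01*(p0-r0) + (r1-q1)*h11*(p1-r1))^2*((q0-p0)^2+(q1-p1)^2))) = (((p0-r0)*h00*(q0-p0) + (p0-r0)*h01*(q1-p1) + (p1-r1)*h01*(q0-p0) + (p1-r1)*h11*(q1-p1))^2*((r0-q0)^2+(r1-q1)^2) + ((q0-p0)*h00*(r0-q0) + (q0-p0)*h01*(r1-q1) + (q1-p1)*h01*(r0-q0) + (q1-p1)*h11*(r1-q1))^2*((p0-r0)^2+(p1-r1)^2) + ((r0-q0)*h00*(p0-r0) + (r0-q0)*h01*(p1-r1)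 + (r1-q1)*h01*(p0-r0) + (r1-q1)*h11*(p1-r1))^2*((q0-p0)^2+(q1-p1)^2))/24 from by field_simp; ring,
      show m * (m * (((h00*p0+h01*p1+d0)^2 + (h01*p0+h11*p1+d1)^2)/2 + ((2*((h00*p0+h01*p1+d0)*(h00*(q0-p0)+h01*(q1-p1)) + (h01*p0+h11*p1+d1)*(h01*(q0-p0)+h11*(q1-p1)))) + (2*((h00*p0+h01*p1+d0)*(h00*(r0-p0)+h01*(r1-p1)) + (h01*p0+h11*p1+d1)*(h01*(r0-p0)+h11*(r1-p1)))))/6 + (((h00*(q0-p0)+h01*(q1-p1))^2 + (h01*(q0-p0)+h11*(q1-p1))^2) + ((h00*(r0-p0)+h01*(r1-p1))^2 + (h01*(r0-p0)+h11*(r1-p1))^2))/12 + (2*((h00*(q0-p0)+h01*(q1-p1))*(h00*(r0-p0)+h01*(r1-p1)) + (h01*(q0-p0)+h11*(q1-p1))*(h01*(r0-p0)+h11*(r1-p1))))/24)) = (m*m) * (((h00*p0+h01*p1+d0)^2 + (h01*p0+h11*p1+d1)^2)/2 + ((2*((h00*p0+h01*p1+d0)*(h00*(q0-p0)+h01*(q1-p1))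 + (h01*p0+h11*p1+d1)*(h01*(q0-p0)+h11*(q1-p1)))) + (2*((h00*p0+h01*p1+d0)*(h00*(r0-p0)+h01*(r1-p1)) + (h01*p0+h11*p1+d1)*(h01*(r0-p0)+h11*(r1-p1)))))/6 + (((h00*(q0-p0)+h01*(q1-p1))^2 + (h01*(q0-p0)+h11*(q1-p1))^2) + ((h00*(r0-p0)+h01*(r1-p1))^2 + (h01*(r0-p0)+h11*(r1-p1))^2))/12 + (2*((h00*(q0-p0)+h01*(q1-p1))*(h00*(r0-p0)+h01*(r1-p1)) + (h01*(q0-p0)+h11*(q1-p1))*(h01*(r0-p0)+h11*(r1-p1))))/24) from by ring, hm2,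
      eq_div_iff (by norm_num : (24:ℝ) ≠ 0)]
  linear_combination (24*(((h00*p0+h01*p1) + ((h00*(q0-p0)+h01*(q1-p1)) + (h00*(r0-p0)+h01*(r1-p1)))/3)*((q0-p0)*(r1-p1) - (q1-p1)*(r0-p0)) + (((q0-p0)*(r1-p1) - (q1-p1)*(r0-p0))*d0 + (-(1/2)*((p0*h00*p0 + p0*h01*p1 + p1*h01*p0 + p1*h11*p1) - (q0*h00*q0 + q0*h01*q1 + q1*h01*q0 + q1*h11*q1))*(p1-r1) + (1/2)*((p0*h00*p0 + p0*h01*p1 + p1*h01*p0 + p1*h11*p1) - (r0*h00*r0 + r0*h01*r1 + r1*h01*r0 + r1*h11*r1))*(p1-q1)))/2)) * hd0 + (24*(((h01*p0+h11*p1) + ((h01*(q0-p0)+h11*(q1-p1)) + (h01*(r0-p0)+h11*(r1-p1)))/3)*((q0-p0)*(r1-p1) - (q1-p1)*(r0-p0)) + (((q0-p0)*(r1-p1) - (q1-p1)*(r0-p0))*d1 + ((p0-q0)*(-(1/2)*((p0*h00*p0 + p0*h01*p1 + p1*h01*p0 + p1*h11*p1) - (r0*h00*r0 + r0*h01*r1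 + r1*h01*r0 + r1*h11*r1))) - (p0-r0)*(-(1/2)*((p0*h00*p0 + p0*h01*p1 + p1*h01*p0 + p1*h11*p1) - (q0*h00*q0 + q0*h01*q1 + q1*h01*q0 + q1*h11*q1)))))/2)) * hd1

/-- For a quadratic `u` with constant Hessian `H` and its linear interpolant `u_I`
on a nondegenerate triangle `K` with vertices `a₁, a₂, a₃`, edge vectors
`ℓᵢ = a_{i+2} − a_{i+1}` and `cᵢ = ℓ_{i+1} · (H ℓ_{i+2})`, one has
`∫_K |∇(u − u_I)|² = (1/(48|K|)) Σᵢ cᵢ² |ℓᵢ|²`. -/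
theorem integral_gradient_sq_interp_error
    (a : Fin 3 → EuclideanSpace ℝ (Fin 2))
    (hind : AffineIndependent ℝ a)
    (K : Set (EuclideanSpace ℝ (Fin 2)))
    (hK : K = convexHull ℝ (Set.range a))
    (H : Matrix (Fin 2) (Fin 2) ℝ) (hH : H.IsSymm)
    (b : EuclideanSpace ℝ (Fin 2)) (c : ℝ)
    (u : EuclideanSpace ℝ (Fin 2) → ℝ)
    (hu : ∀ x, u x = (1 / 2) * matBilin H x x + ⟪b, x⟫ + c)
    (uI : EuclideanSpace ℝ (Fin 2) →ᵃ[ℝ] ℝ)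
    (hI : ∀ i, uI (a i) = u (a i))
    (ℓ : Fin 3 → EuclideanSpace ℝ (Fin 2))
    (hℓ : ∀ i, ℓ i = a (i + 2) - a (i + 1))
    (cc : Fin 3 → ℝ)
    (hcc : ∀ i, cc i = matBilin H (ℓ (i + 1)) (ℓ (i + 2))) :
    ∫ x in K, ‖gradient (fun y => u y - uI y) x‖ ^ 2 =
      (1 / (48 * (volume K).toReal)) * ∑ i : Fin 3, (cc i) ^ 2 * ‖ℓ i‖ ^ 2 := by
  set w0 : ℝ := uI.linear (EuclideanSpace.single 0 1) with hw0def
  set w1 : ℝ := uI.linear (EuclideanSpace.single 1 1) with hw1def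
  -- affine interpolant in coordinates
  have huIy : ∀ y : EuclideanSpace ℝ (Fin 2), uI y = y 0 * w0 + y 1 * w1 + uI 0 := by
    intro y
    have hdec : uI y = uI.linear y + uI 0 := by
      have := congrFun (AffineMap.decomp uI) y
      simpa using this
    have hy : y = y 0 • EuclideanSpace.single 0 1 + y 1 • EuclideanSpace.single 1 1 := by
      ext i
      fin_cases i <;>
        simp [PiLp.add_apply, PiLp.smul_apply, EuclideanSpace.single_apply, smul_eq_mul]
    have hlin : uI.linear y = y 0 * w0 + y 1 * w1 := by
      conv_lhs => rw [hy]
      rw [map_add, LinearMap.map_smul, LinearMap.map_smul, smul_eq_mul, smul_eq_mul]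
    rw [hdec, hlin]
  have h10 : H 1 0 = H 0 1 := by
    have := congrFun (congrFun hH 0) 1
    simpa [Matrix.transpose_apply] using this
  -- pointwise formula for the squared gradient norm
  have hnorm : ∀ x : EuclideanSpace ℝ (Fin 2), ‖gradient (fun y => u y - uI y) x‖ ^ 2
      = (H 0 0*x 0 + H 0 1*x 1 + (b 0 - w0))^2 + (H 0 1*x 0 + H 1 1*x 1 + (b 1 - w1))^2 := by
    intro x
    have hfun : (fun y : EuclideanSpace ℝ (Fin 2) => u y - uI y) = fun y =>
        (H 0 0/2)*(y 0*y 0) + (H 0 1)*(y 0*y 1) + (H 1 1/2)*(y 1*y 1)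
          + (b 0 - w0)*y 0 + (b 1 - w1)*y 1 + (c - uI 0) := by
      funext y
      rw [hu y, huIy y]
      simp only [matBilin, Fin.sum_univ_two, PiLp.inner_apply, RCLike.inner_apply, conj_trivial]
      rw [h10]; ring
    rw [hfun]
    have hg := hasGradientAt_quad (H 0 0/2) (H 0 1) (H 1 1/2) (b 0 - w0) (b 1 - w1) (c - uI 0) x
    rw [hg.gradient, norm_vec2_sq]
    ring
  -- geometry
  have hKim : K = (fun t => a 0 + lmap (a 1 - a 0) (a 2 - a 0) t) '' triT := by
    rw [hK]; exact (psi_image a).symm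
  have hDD : (lmap (a 1 - a 0) (a 2 - a 0)).det = ((a 1 0-a 0 0)*(a 2 1-a 0 1) - (a 1 1-a 0 1)*(a 2 0-a 0 0)) := by
    rw [lmap_det]; rfl
  have hDne : ((a 1 0-a 0 0)*(a 2 1-a 0 1) - (a 1 1-a 0 1)*(a 2 0-a 0 0)) ≠ 0 := det_ne_zero a hind
  have hderiv : ∀ t ∈ triT, HasFDerivWithinAt (fun t => a 0 + lmap (a 1 - a 0) (a 2 - a 0) t)
      (lmap (a 1 - a 0) (a 2 - a 0)) triT t := fun t _ =>
    (((lmap (a 1 - a 0) (a 2 - a 0)).hasFDerivAt).const_add (a 0)).hasFDerivWithinAt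
  have hinj : Set.InjOn (fun t => a 0 + lmap (a 1 - a 0) (a 2 - a 0) t) triT :=
    (lmap_inj (a 1 - a 0) (a 2 - a 0) hDne (a 0)).injOn
  have hps : ∀ (t : EuclideanSpace ℝ (Fin 2)) (i : Fin 2),
      (a 0 + lmap (a 1 - a 0) (a 2 - a 0) t) i
        = a 0 i + (t 0 * (a 1 i - a 0 i) + t 1 * (a 2 i - a 0 i)) := by
    intro t i
    rw [show (a 0 + lmap (a 1 - a 0) (a 2 - a 0) t) i
        = a 0 i + lmap (a 1 - a 0) (a 2 - a 0) t i from rfl, lmap_apply]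
    simp only [PiLp.sub_apply]
  -- volume of K
  have hvolK : (volume K).toReal = |((a 1 0-a 0 0)*(a 2 1-a 0 1) - (a 1 1-a 0 1)*(a 2 0-a 0 0))| / 2 := by
    have h1 : (volume K).toReal = ∫ _x in K, (1:ℝ) := by
      rw [setIntegral_const, smul_eq_mul, mul_one]; rfl
    rw [h1, hKim, integral_image_eq_integral_abs_det_fderiv_smul volume triT_measurable hderiv hinj]
    have h2 : Set.EqOn (fun t : EuclideanSpace ℝ (Fin 2) =>
        |(lmap (a 1 - a 0) (a 2 - a 0)).det| • (1:ℝ))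
        (fun t => (fun pz : ℝ × ℝ => |((a 1 0-a 0 0)*(a 2 1-a 0 1) - (a 1 1-a 0 1)*(a 2 0-a 0 0))| + 0*pz.1 + 0*pz.2 + 0*pz.1^2 + 0*(pz.1*pz.2) + 0*pz.2^2) (t 0, t 1)) triT := by
      intro t _
      rw [hDD, smul_eq_mul, mul_one]
      simp only []
      ring
    rw [setIntegral_congr_fun triT_measurable h2]
    rw [show (∫ t in triT, (fun t : EuclideanSpace ℝ (Fin 2) => (fun pz : ℝ × ℝ => |((a 1 0-a 0 0)*(a 2 1-a 0 1) - (a 1 1-a 0 1)*(a 2 0-a 0 0))| + 0*pz.1 + 0*pz.2 + 0*pz.1^2 + 0*(pz.1*pz.2) + 0*pz.2^2) (t 0, t 1)) t)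
        = ∫ p in {p : ℝ × ℝ | 0 ≤ p.1 ∧ 0 ≤ p.2 ∧ p.1 + p.2 ≤ 1}, (fun pz : ℝ × ℝ => |((a 1 0-a 0 0)*(a 2 1-a 0 1) - (a 1 1-a 0 1)*(a 2 0-a 0 0))| + 0*pz.1 + 0*pz.2 + 0*pz.1^2 + 0*(pz.1*pz.2) + 0*pz.2^2) p
      from setIntegral_e2_triangle _]
    rw [show (∫ p in {p : ℝ × ℝ | 0 ≤ p.1 ∧ 0 ≤ p.2 ∧ p.1 + p.2 ≤ 1}, (fun pz : ℝ × ℝ => |((a 1 0-a 0 0)*(a 2 1-a 0 1) - (a 1 1-a 0 1)*(a 2 0-a 0 0))| + 0*pz.1 + 0*pz.2 + 0*pz.1^2 + 0*(pz.1*pz.2) + 0*pz.2^2) p) = _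
      from integral_quad_tri _ _ _ _ _ _]
    ring
  -- interpolation constraints
  have hIc : ∀ i : Fin 3, (1/2)*(a i 0*H 0 0*a i 0 + a i 0*H 0 1*a i 1
        + a i 1*H 1 0*a i 0 + a i 1*H 1 1*a i 1) + (b 0*a i 0 + b 1*a i 1) + c
      = a i 0*w0 + a i 1*w1 + uI 0 := by
    intro i
    have h1 := hI i
    rw [hu (a i), huIy (a i)] at h1
    simp only [matBilin, Fin.sum_univ_two, PiLp.inner_apply, RCLike.inner_apply,
      conj_trivial] at h1
    linarith [h1]
  have he1 : (1/2)*((a 0 0*H 0 0*a 0 0 + a 0 0*H 0 1*a 0 1 + a 0 1*H 0 1*a 0 0 + a 0 1*H 1 1*a 0 1) - (a 1 0*H 0 0*a 1 0 + a 1 0*H 0 1*a 1 1 + a 1 1*H 0 1*a 1 0 + a 1 1*H 1 1*a 1 1)) + (b 0 - w0)*(a 0 0-a 1 0) + (b 1 - w1)*(a 0 1-a 1 1) = 0 := by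
    linear_combination hIc 0 - hIc 1 - ((a 0 0*a 0 1 - a 1 0*a 1 1)/2)*h10
  have he2 : (1/2)*((a 0 0*H 0 0*a 0 0 + a 0 0*H 0 1*a 0 1 + a 0 1*H 0 1*a 0 0 + a 0 1*H 1 1*a 0 1) - (a 2 0*H 0 0*a 2 0 + a 2 0*H 0 1*a 2 1 + a 2 1*H 0 1*a 2 0 + a 2 1*H 1 1*a 2 1)) + (b 0 - w0)*(a 0 0-a 2 0) + (b 1 - w1)*(a 0 1-a 2 1) = 0 := by
    linear_combination hIc 0 - hIc 2 - ((a 0 0*a 0 1 - a 2 0*a 2 1)/2)*h10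
  -- the main integral computation
  have hmain : ∫ x in K, ‖gradient (fun y => u y - uI y) x‖ ^ 2
      = |((a 1 0-a 0 0)*(a 2 1-a 0 1) - (a 1 1-a 0 1)*(a 2 0-a 0 0))| * (((H 0 0*a 0 0+H 0 1*a 0 1+(b 0 - w0))^2 + (H 0 1*a 0 0+H 1 1*a 0 1+(b 1 - w1))^2)/2 + ((2*((H 0 0*a 0 0+H 0 1*a 0 1+(b 0 - w0))*(H 0 0*(a 1 0-a 0 0)+H 0 1*(a 1 1-a 0 1)) + (H 0 1*a 0 0+H 1 1*a 0 1+(b 1 - w1))*(H 0 1*(a 1 0-a 0 0)+H 1 1*(a 1 1-a 0 1)))) + (2*((H 0 0*a 0 0+H 0 1*a 0 1+(b 0 - w0))*(H 0 0*(a 2 0-a 0 0)+H 0 1*(a 2 1-a 0 1)) + (H 0 1*a 0 0+H 1 1*a 0 1+(b 1 - w1))*(H 0 1*(a 2 0-a 0 0)+H 1 1*(a 2 1-a 0 1)))))/6 + (((H 0 0*(a 1 0-a 0 0)+H 0 1*(a 1 1-a 0 1))^2 + (H 0 1*(a 1 0-a 0 0)+H 1 1*(a 1 1-a 0 1))^2)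 + ((H 0 0*(a 2 0-a 0 0)+H 0 1*(a 2 1-a 0 1))^2 + (H 0 1*(a 2 0-a 0 0)+H 1 1*(a 2 1-a 0 1))^2))/12 + (2*((H 0 0*(a 1 0-a 0 0)+H 0 1*(a 1 1-a 0 1))*(H 0 0*(a 2 0-a 0 0)+H 0 1*(a 2 1-a 0 1)) + (H 0 1*(a 1 0-a 0 0)+H 1 1*(a 1 1-a 0 1))*(H 0 1*(a 2 0-a 0 0)+H 1 1*(a 2 1-a 0 1))))/24) := by
    calc ∫ x in K, ‖gradient (fun y => u y - uI y) x‖ ^ 2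
        = ∫ x in K, (H 0 0*x 0 + H 0 1*x 1 + (b 0 - w0))^2
            + (H 0 1*x 0 + H 1 1*x 1 + (b 1 - w1))^2 := by simp only [hnorm]
      _ = ∫ t in triT, |(lmap (a 1 - a 0) (a 2 - a 0)).det|
            • ((fun x : EuclideanSpace ℝ (Fin 2) => (H 0 0*x 0 + H 0 1*x 1 + (b 0 - w0))^2 + (H 0 1*x 0 + H 1 1*x 1 + (b 1 - w1))^2) (a 0 + lmap (a 1 - a 0) (a 2 - a 0) t)) := by
          rw [hKim]
          exact integral_image_eq_integral_abs_det_fderiv_smul volume triT_measurable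
            hderiv hinj (fun x : EuclideanSpace ℝ (Fin 2) => (H 0 0*x 0 + H 0 1*x 1 + (b 0 - w0))^2 + (H 0 1*x 0 + H 1 1*x 1 + (b 1 - w1))^2)
      _ = ∫ t in triT, |((a 1 0-a 0 0)*(a 2 1-a 0 1) - (a 1 1-a 0 1)*(a 2 0-a 0 0))| * ((fun pz : ℝ × ℝ => ((H 0 0*a 0 0+H 0 1*a 0 1+(b 0 - w0))^2 + (H 0 1*a 0 0+H 1 1*a 0 1+(b 1 - w1))^2) + (2*((H 0 0*a 0 0+H 0 1*a 0 1+(b 0 - w0))*(H 0 0*(a 1 0-a 0 0)+H 0 1*(a 1 1-a 0 1)) + (H 0 1*a 0 0+H 1 1*a 0 1+(b 1 - w1))*(H 0 1*(a 1 0-a 0 0)+H 1 1*(a 1 1-a 0 1))))*pz.1 + (2*((H 0 0*a 0 0+H 0 1*a 0 1+(b 0 - w0))*(H 0 0*(a 2 0-a 0 0)+H 0 1*(a 2 1-a 0 1)) + (H 0 1*a 0 0+H 1 1*a 0 1+(b 1 - w1))*(H 0 1*(a 2 0-a 0 0)+H 1 1*(a 2 1-a 0 1))))*pz.2 + ((H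 0 0*(a 1 0-a 0 0)+H 0 1*(a 1 1-a 0 1))^2 + (H 0 1*(a 1 0-a 0 0)+H 1 1*(a 1 1-a 0 1))^2)*pz.1^2 + (2*((H 0 0*(a 1 0-a 0 0)+H 0 1*(a 1 1-a 0 1))*(H 0 0*(a 2 0-a 0 0)+H 0 1*(a 2 1-a 0 1)) + (H 0 1*(a 1 0-a 0 0)+H 1 1*(a 1 1-a 0 1))*(H 0 1*(a 2 0-a 0 0)+H 1 1*(a 2 1-a 0 1))))*(pz.1*pz.2) + ((H 0 0*(a 2 0-a 0 0)+H 0 1*(a 2 1-a 0 1))^2 + (H 0 1*(a 2 0-a 0 0)+H 1 1*(a 2 1-a 0 1))^2)*pz.2^2) (t 0, t 1)) := by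
          refine setIntegral_congr_fun triT_measurable fun t _ => ?_
          rw [hDD, smul_eq_mul]
          simp only []
          rw [hps t 0, hps t 1]
          ring
      _ = |((a 1 0-a 0 0)*(a 2 1-a 0 1) - (a 1 1-a 0 1)*(a 2 0-a 0 0))| * ∫ t in triT, ((fun pz : ℝ × ℝ => ((H 0 0*a 0 0+H 0 1*a 0 1+(b 0 - w0))^2 + (H 0 1*a 0 0+H 1 1*a 0 1+(b 1 - w1))^2) + (2*((H 0 0*a 0 0+H 0 1*a 0 1+(b 0 - w0))*(H 0 0*(a 1 0-a 0 0)+H 0 1*(a 1 1-a 0 1)) + (H 0 1*a 0 0+H 1 1*a 0 1+(b 1 - w1))*(H 0 1*(a 1 0-a 0 0)+H 1 1*(a 1 1-a 0 1))))*pz.1 + (2*((H 0 0*a 0 0+H 0 1*a 0 1+(b 0 - w0))*(H 0 0*(a 2 0-a 0 0)+H 0 1*(a 2 1-a 0 1)) + (H 0 1*a 0 0+H 1 1*a 0 1+(b 1 - w1))*(H 0 1*(a 2 0-a 0 0)+H 1 1*(a 2 1-a 0 1))))*pz.2 + ((H 0 0*(a 1 0-a 0 0)+H 0 1*(a 1 1-a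 0 1))^2 + (H 0 1*(a 1 0-a 0 0)+H 1 1*(a 1 1-a 0 1))^2)*pz.1^2 + (2*((H 0 0*(a 1 0-a 0 0)+H 0 1*(a 1 1-a 0 1))*(H 0 0*(a 2 0-a 0 0)+H 0 1*(a 2 1-a 0 1)) + (H 0 1*(a 1 0-a 0 0)+H 1 1*(a 1 1-a 0 1))*(H 0 1*(a 2 0-a 0 0)+H 1 1*(a 2 1-a 0 1))))*(pz.1*pz.2) + ((H 0 0*(a 2 0-a 0 0)+H 0 1*(a 2 1-a 0 1))^2 + (H 0 1*(a 2 0-a 0 0)+H 1 1*(a 2 1-a 0 1))^2)*pz.2^2) (t 0, t 1)) := integral_const_mul _ _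
      _ = |((a 1 0-a 0 0)*(a 2 1-a 0 1) - (a 1 1-a 0 1)*(a 2 0-a 0 0))| * (((H 0 0*a 0 0+H 0 1*a 0 1+(b 0 - w0))^2 + (H 0 1*a 0 0+H 1 1*a 0 1+(b 1 - w1))^2)/2 + ((2*((H 0 0*a 0 0+H 0 1*a 0 1+(b 0 - w0))*(H 0 0*(a 1 0-a 0 0)+H 0 1*(a 1 1-a 0 1)) + (H 0 1*a 0 0+H 1 1*a 0 1+(b 1 - w1))*(H 0 1*(a 1 0-a 0 0)+H 1 1*(a 1 1-a 0 1)))) + (2*((H 0 0*a 0 0+H 0 1*a 0 1+(b 0 - w0))*(H 0 0*(a 2 0-a 0 0)+H 0 1*(a 2 1-a 0 1)) + (H 0 1*a 0 0+H 1 1*a 0 1+(b 1 - w1))*(H 0 1*(a 2 0-a 0 0)+H 1 1*(a 2 1-a 0 1)))))/6 + (((H 0 0*(a 1 0-a 0 0)+H 0 1*(a 1 1-a 0 1))^2 + (H 0 1*(a 1 0-a 0 0)+H 1 1*(a 1 1-a 0 1))^2) + ((H 0 0*(a 2 0-a 0 0)+H 0 1*(a 2 1-a 0 1))^2 + (H 0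 1*(a 2 0-a 0 0)+H 1 1*(a 2 1-a 0 1))^2))/12 + (2*((H 0 0*(a 1 0-a 0 0)+H 0 1*(a 1 1-a 0 1))*(H 0 0*(a 2 0-a 0 0)+H 0 1*(a 2 1-a 0 1)) + (H 0 1*(a 1 0-a 0 0)+H 1 1*(a 1 1-a 0 1))*(H 0 1*(a 2 0-a 0 0)+H 1 1*(a 2 1-a 0 1))))/24) := by
          exact congrArg (fun z => _ * z)
            ((setIntegral_e2_triangle _).trans (integral_quad_tri _ _ _ _ _ _))
  rw [hmain, hvolK, Fin.sum_univ_three]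
  -- scalarize the edge vectors and coefficients
  have hl0 : ℓ 0 = a 2 - a 1 := by
    rw [hℓ 0, show ((0:Fin 3)+2) = 2 from by decide, show ((0:Fin 3)+1) = 1 from by decide]
  have hl1 : ℓ 1 = a 0 - a 2 := by
    rw [hℓ 1, show ((1:Fin 3)+2) = 0 from by decide, show ((1:Fin 3)+1) = 2 from by decide]
  have hl2 : ℓ 2 = a 1 - a 0 := by
    rw [hℓ 2, show ((2:Fin 3)+2) = 1 from by decide, show ((2:Fin 3)+1) = 0 from by decide]
  have hcc0 : cc 0 = ((a 0 0-a 2 0)*H 0 0*(a 1 0-a 0 0) + (a 0 0-a 2 0)*H 0 1*(a 1 1-a 0 1) + (a 0 1-a 2 1)*H 0 1*(a 1 0-a 0 0) + (a 0 1-a 2 1)*H 1 1*(a 1 1-a 0 1)) := by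
    rw [hcc 0, show ((0:Fin 3)+1) = 1 from by decide, show ((0:Fin 3)+2) = 2 from by decide, hl1, hl2]
    simp only [matBilin, Fin.sum_univ_two, PiLp.sub_apply, h10]
    ring
  have hcc1 : cc 1 = ((a 1 0-a 0 0)*H 0 0*(a 2 0-a 1 0) + (a 1 0-a 0 0)*H 0 1*(a 2 1-a 1 1) + (a 1 1-a 0 1)*H 0 1*(a 2 0-a 1 0) + (a 1 1-a 0 1)*H 1 1*(a 2 1-a 1 1)) := by
    rw [hcc 1, show ((1:Fin 3)+1) = 2 from by decide, show ((1:Fin 3)+2) = 0 from by decide, hl2, hl0]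
    simp only [matBilin, Fin.sum_univ_two, PiLp.sub_apply, h10]
    ring
  have hcc2 : cc 2 = ((a 2 0-a 1 0)*H 0 0*(a 0 0-a 2 0) + (a 2 0-a 1 0)*H 0 1*(a 0 1-a 2 1) + (a 2 1-a 1 1)*H 0 1*(a 0 0-a 2 0) + (a 2 1-a 1 1)*H 1 1*(a 0 1-a 2 1)) := by
    rw [hcc 2, show ((2:Fin 3)+1) = 0 from by decide, show ((2:Fin 3)+2) = 1 from by decide, hl0, hl1]
    simp only [matBilin, Fin.sum_univ_two, PiLp.sub_apply, h10]
    ring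
  have hn0 : ‖ℓ 0‖^2 = (a 2 0 - a 1 0)^2 + (a 2 1 - a 1 1)^2 := by
    rw [hl0, norm_sq_e2]; rfl
  have hn1 : ‖ℓ 1‖^2 = (a 0 0 - a 2 0)^2 + (a 0 1 - a 2 1)^2 := by
    rw [hl1, norm_sq_e2]; rfl
  have hn2 : ‖ℓ 2‖^2 = (a 1 0 - a 0 0)^2 + (a 1 1 - a 0 1)^2 := by
    rw [hl2, norm_sq_e2]; rfl
  rw [hcc0, hcc1, hcc2, hn0, hn1, hn2]
  have habs : |((a 1 0-a 0 0)*(a 2 1-a 0 1) - (a 1 1-a 0 1)*(a 2 0-a 0 0))| ≠ 0 := abs_ne_zero.mpr hDne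
  have hm2 : |((a 1 0-a 0 0)*(a 2 1-a 0 1) - (a 1 1-a 0 1)*(a 2 0-a 0 0))| * |((a 1 0-a 0 0)*(a 2 1-a 0 1) - (a 1 1-a 0 1)*(a 2 0-a 0 0))| = ((a 1 0-a 0 0)*(a 2 1-a 0 1) - (a 1 1-a 0 1)*(a 2 0-a 0 0)) * ((a 1 0-a 0 0)*(a 2 1-a 0 1) - (a 1 1-a 0 1)*(a 2 0-a 0 0)) := abs_mul_abs_self _
  linear_combination final_algebra (a 0 0) (a 0 1) (a 1 0) (a 1 1) (a 2 0) (a 2 1)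
    (H 0 0) (H 0 1) (H 1 1) (b 0 - w0) (b 1 - w1) |((a 1 0-a 0 0)*(a 2 1-a 0 1) - (a 1 1-a 0 1)*(a 2 0-a 0 0))| habs hm2 he1 he2
end

section
/- Let K ⊂ ℝ² be a nondegenerate triangle with vertices a₁, a₂, a₃, and let λ₁, λ₂, λ₃ : ℝ² → ℝ be the barycentric coordinate functions of K (the affine functions with λ_i(a_j) = δ_{ij}). Let u : ℝ² → ℝ be a quadratic polynomial with constant Hessian H and u_I its linear interpolant at the vertices. Then for every x ∈ ℝ², u(x) − u_I(x) = −(1/2) Σ_{i=1}^{3} λ_i(x) · [(x − a_i) · (H(x − a_i))]. -/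
open RealInnerProductSpace

private lemma sum_swap_mul {n m : ℕ} (L : Fin n → ℝ) (f : Fin n → Fin m → ℝ) :
    ∑ i, L i * ∑ k, f i k = ∑ k, ∑ i, L i * f i k := by
  simp_rw [Finset.mul_sum]
  exact Finset.sum_comm

/-- Error expansion: for a quadratic `u` with constant Hessian `H`, its linear
interpolant `u_I` at the vertices of a nondegenerate triangle with barycentric
coordinates `λᵢ`, one has
`u(x) − u_I(x) = −(1/2) Σᵢ λᵢ(x) [(x − aᵢ) · H (x − aᵢ)]` for all `x`. -/
theorem interp_error_expansion
    (a : Fin 3 → EuclideanSpace ℝ (Fin 2))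
    (hind : AffineIndependent ℝ a)
    (lam : Fin 3 → (EuclideanSpace ℝ (Fin 2) →ᵃ[ℝ] ℝ))
    (hlam : ∀ i j, lam i (a j) = if i = j then 1 else 0)
    (H : Matrix (Fin 2) (Fin 2) ℝ) (hH : H.IsSymm)
    (b : EuclideanSpace ℝ (Fin 2)) (c : ℝ)
    (u : EuclideanSpace ℝ (Fin 2) → ℝ)
    (hu : ∀ x, u x = (1 / 2) * matBilin H x x + ⟪b, x⟫ + c)
    (uI : EuclideanSpace ℝ (Fin 2) →ᵃ[ℝ] ℝ)
    (hI : ∀ i, uI (a i) = u (a i)) :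
    ∀ x, u x - uI x =
      -(1 / 2) * ∑ i : Fin 3, lam i x * matBilin H (x - a i) (x - a i) := by
  intro x
  have htop : affineSpan ℝ (Set.range a) = ⊤ := by
    rw [hind.affineSpan_eq_top_iff_card_eq_finrank_add_one]
    simp [finrank_euclideanSpace_fin]
  set B : AffineBasis (Fin 3) ℝ (EuclideanSpace ℝ (Fin 2)) := ⟨a, hind, htop⟩ with hB
  set L : Fin 3 → ℝ := fun i => B.coord i x with hL
  have hsum : ∑ i, L i = 1 := B.sum_coord_apply_eq_one x
  have hxcomb : (Finset.univ.affineCombination ℝ a L) = x :=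
    B.affineCombination_coord_eq_self x
  have hxlin : ∑ i, L i • a i = x := by
    rw [← Finset.affineCombination_eq_linear_combination _ _ _ hsum, hxcomb]
  have hlamL : ∀ i, lam i x = L i := by
    intro i
    have h := Finset.map_affineCombination Finset.univ a L hsum (lam i)
    rw [hxcomb] at h
    rw [h, Finset.affineCombination_eq_linear_combination _ _ _ hsum]
    simp only [Function.comp, hlam, smul_eq_mul, mul_ite, mul_one, mul_zero]
    simp
  have hIx : uI x = ∑ i, L i * u (a i) := by
    have h := Finset.map_affineCombination Finset.univ a L hsum uI
    rw [hxcomb] at h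
    rw [h, Finset.affineCombination_eq_linear_combination _ _ _ hsum]
    simp [Function.comp, hI]
  have hxj : ∀ k : Fin 2, ∑ i, L i * a i k = x k := by
    intro k
    have := congrArg (fun v : EuclideanSpace ℝ (Fin 2) => v k) hxlin
    simpa [Finset.sum_apply] using this
  -- key bilinear identities
  have hP : ∑ i, L i * matBilin H x (a i) = matBilin H x x := by
    simp only [matBilin]
    rw [sum_swap_mul]
    refine Finset.sum_congr rfl fun j _ => ?_
    rw [sum_swap_mul]
    refine Finset.sum_congr rfl fun k _ => ?_
    rw [show ∀ g : Fin 3 → ℝ, (∑ i, L i * (x j * H j k * g i)) = x j * H j k * ∑ i, L i * g i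
      from fun g => by rw [Finset.mul_sum]; exact Finset.sum_congr rfl fun i _ => by ring]
    rw [hxj]
  have hQ : ∑ i, L i * matBilin H (a i) x = matBilin H x x := by
    simp only [matBilin]
    rw [sum_swap_mul]
    refine Finset.sum_congr rfl fun j _ => ?_
    rw [sum_swap_mul]
    refine Finset.sum_congr rfl fun k _ => ?_
    rw [show ∀ g : Fin 3 → ℝ, (∑ i, L i * (g i * H j k * x k)) = (∑ i, L i * g i) * H j k * x k
      from fun g => by rw [Finset.sum_mul, Finset.sum_mul]
                       exact Finset.sum_congr rfl fun i _ => by ring]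
    rw [hxj]
  have hb : ∑ i, L i * (⟪b, a i⟫ : ℝ) = ⟪b, x⟫ := by
    simp only [PiLp.inner_apply, RCLike.inner_apply, starRingEnd_apply, star_trivial]
    rw [sum_swap_mul]
    refine Finset.sum_congr rfl fun k _ => ?_
    rw [show (∑ i, L i * (a i k * b k)) = (∑ i, L i * a i k) * b k
      from by rw [Finset.sum_mul]; exact Finset.sum_congr rfl fun i _ => by ring]
    rw [hxj]
  have hexp : ∀ i, matBilin H (x - a i) (x - a i)
      = matBilin H x x - matBilin H x (a i) - matBilin H (a i) x + matBilin H (a i) (a i) := by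
    intro i
    simp only [matBilin, PiLp.sub_apply]
    rw [← Finset.sum_sub_distrib, ← Finset.sum_sub_distrib, ← Finset.sum_add_distrib]
    refine Finset.sum_congr rfl fun j _ => ?_
    rw [← Finset.sum_sub_distrib, ← Finset.sum_sub_distrib, ← Finset.sum_add_distrib]
    exact Finset.sum_congr rfl fun k _ => by ring
  have hexp' : ∑ i, L i * matBilin H (x - a i) (x - a i)
      = (∑ i, L i) * matBilin H x x - (∑ i, L i * matBilin H x (a i))
        - (∑ i, L i * matBilin H (a i) x) + ∑ i, L i * matBilin H (a i) (a i) := by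
    rw [Finset.sum_mul, ← Finset.sum_sub_distrib, ← Finset.sum_sub_distrib,
      ← Finset.sum_add_distrib]
    exact Finset.sum_congr rfl fun i _ => by rw [hexp i]; ring
  have hsplit : ∑ i, L i * (1 / 2 * matBilin H (a i) (a i) + ⟪b, a i⟫ + c)
      = 1 / 2 * (∑ i, L i * matBilin H (a i) (a i)) + (∑ i, L i * (⟪b, a i⟫ : ℝ))
        + (∑ i, L i) * c := by
    rw [Finset.mul_sum, Finset.sum_mul, ← Finset.sum_add_distrib, ← Finset.sum_add_distrib]
    exact Finset.sum_congr rfl fun i _ => by ring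
  simp only [hlamL]
  rw [hu x, hIx]
  simp only [hu]
  rw [hexp', hsplit, hb, hP, hQ, hsum]
  ring
end

section
/- Let K ⊂ ℝ² be a nondegenerate triangle with vertices a₁, a₂, a₃, and let λ₁, λ₂, λ₃ be its barycentric coordinate functions. Let u : ℝ² → ℝ be a quadratic polynomial with constant Hessian H and u_I its linear interpolant at the vertices. Then for every x ∈ ℝ², ∇(u − u_I)(x) = −(1/2) Σ_{i=1}^{3} ∇λ_i · [(x − a_i) · (H(x − a_i))], where ∇λ_i denotes the (constant) gradient vector of the affine function λ_i. -/
open RealInnerProductSpace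

private lemma affineMap_sum_apply {ι : Type*} (s : Finset ι)
    (f : ι → (EuclideanSpace ℝ (Fin 2) →ᵃ[ℝ] ℝ)) (y : EuclideanSpace ℝ (Fin 2)) :
    (∑ i ∈ s, f i) y = ∑ i ∈ s, f i y := by
  induction s using Finset.cons_induction with
  | empty => simp [AffineMap.coe_zero]
  | cons i s hi ih => simp [Finset.sum_cons, AffineMap.coe_add, ih]

private lemma affine_eq_on_triangle (a : Fin 3 → EuclideanSpace ℝ (Fin 2))
    (hind : AffineIndependent ℝ a)
    (f h : EuclideanSpace ℝ (Fin 2) →ᵃ[ℝ] ℝ)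
    (heq : ∀ j, f (a j) = h (a j)) (y : EuclideanSpace ℝ (Fin 2)) : f y = h y := by
  have hspan : affineSpan ℝ (Set.range a) = ⊤ := by
    rw [hind.affineSpan_eq_top_iff_card_eq_finrank_add_one]
    simp [finrank_euclideanSpace_fin]
  have hy : y ∈ affineSpan ℝ (Set.range a) := hspan ▸ AffineSubspace.mem_top ℝ _ y
  refine affineSpan_induction (p := fun z => f z = h z) hy ?_ ?_
  · rintro z ⟨j, rfl⟩; exact heq j
  · intro c u v w hu hv hw
    have key : ∀ F : EuclideanSpace ℝ (Fin 2) →ᵃ[ℝ] ℝ,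
        F (c • (u -ᵥ v) +ᵥ w) = c * (F u - F v) + F w := by
      intro F
      rw [AffineMap.map_vadd, map_smul, AffineMap.linearMap_vsub]
      simp [smul_eq_mul]
    rw [key f, key h, hu, hv, hw]

private lemma bary_sum (a : Fin 3 → EuclideanSpace ℝ (Fin 2))
    (hind : AffineIndependent ℝ a)
    (lam : Fin 3 → (EuclideanSpace ℝ (Fin 2) →ᵃ[ℝ] ℝ))
    (hlam : ∀ i j, lam i (a j) = if i = j then 1 else 0)
    (r : Fin 3 → ℝ) (T : EuclideanSpace ℝ (Fin 2) →ᵃ[ℝ] ℝ)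
    (hT : ∀ j, T (a j) = r j) (y : EuclideanSpace ℝ (Fin 2)) :
    ∑ i : Fin 3, lam i y * r i = T y := by
  have := affine_eq_on_triangle a hind (∑ i : Fin 3, r i • lam i) T
    (fun j => by
      rw [affineMap_sum_apply]
      simp only [AffineMap.coe_smul, Pi.smul_apply, smul_eq_mul, hlam]
      simp [Finset.sum_ite_eq', hT]) y
  rw [affineMap_sum_apply] at this
  simpa only [AffineMap.coe_smul, Pi.smul_apply, smul_eq_mul, mul_comm] using this

/-- Gradient error expansion: for a quadratic `u` with constant Hessian `H`, its linear
interpolant `u_I` at the vertices of a nondegenerate triangle with barycentric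
coordinates `λᵢ` having constant gradients `∇λᵢ = g i`, one has
`∇(u − u_I)(x) = −(1/2) Σᵢ [(x − aᵢ) · H (x − aᵢ)] ∇λᵢ` for all `x`. -/
theorem gradient_interp_error_expansion
    (a : Fin 3 → EuclideanSpace ℝ (Fin 2))
    (hind : AffineIndependent ℝ a)
    (lam : Fin 3 → (EuclideanSpace ℝ (Fin 2) →ᵃ[ℝ] ℝ))
    (hlam : ∀ i j, lam i (a j) = if i = j then 1 else 0)
    (g : Fin 3 → EuclideanSpace ℝ (Fin 2))
    (hg : ∀ i x, gradient (fun y => lam i y) x = g i)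
    (H : Matrix (Fin 2) (Fin 2) ℝ) (hH : H.IsSymm)
    (b : EuclideanSpace ℝ (Fin 2)) (c : ℝ)
    (u : EuclideanSpace ℝ (Fin 2) → ℝ)
    (hu : ∀ x, u x = (1 / 2) * matBilin H x x + ⟪b, x⟫ + c)
    (uI : EuclideanSpace ℝ (Fin 2) →ᵃ[ℝ] ℝ)
    (hI : ∀ i, uI (a i) = u (a i)) :
    ∀ x, gradient (fun y => u y - uI y) x =
      (-(1 / 2) : ℝ) • ∑ i : Fin 3, matBilin H (x - a i) (x - a i) • g i := by
  intro x
  -- barycentric identities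
  have h1 : ∀ y : (EuclideanSpace ℝ (Fin 2)), ∑ i : Fin 3, lam i y = 1 := by
    intro y
    have := bary_sum a hind lam hlam (fun _ => 1) (AffineMap.const ℝ (EuclideanSpace ℝ (Fin 2)) (1 : ℝ))
      (fun j => rfl) y
    simpa using this
  have h2 : ∀ (y : (EuclideanSpace ℝ (Fin 2))) (k : Fin 2), ∑ i : Fin 3, lam i y * a i k = y k := by
    intro y k
    exact bary_sum a hind lam hlam (fun i => a i k)
      ((EuclideanSpace.proj k : (EuclideanSpace ℝ (Fin 2)) →L[ℝ] ℝ).toLinearMap.toAffineMap) (fun j => rfl) y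
  have h3 : ∀ y : (EuclideanSpace ℝ (Fin 2)), ∑ i : Fin 3, lam i y * u (a i) = uI y := by
    intro y
    exact bary_sum a hind lam hlam (fun i => u (a i)) uI (fun j => (hI j)) y
  -- pointwise error formula
  set B : Fin 3 → ℝ := fun i => matBilin H (a i) (a i) with hB
  have hkey : ∀ y : (EuclideanSpace ℝ (Fin 2)), u y - uI y
      = (1 / 2) * matBilin H y y - (1 / 2) * ∑ i : Fin 3, lam i y * B i := by
    intro y
    rw [hu y, ← h3 y]
    have e1 := h1 y
    have e2 := h2 y 0
    have e3 := h2 y 1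
    simp only [hu, hB, Fin.sum_univ_three] at *
    simp only [PiLp.inner_apply, RCLike.inner_apply, starRingEnd_apply, star_trivial,
      Fin.sum_univ_two] at *
    linear_combination (-c : ℝ) * e1 + (-b 0) * e2 + (-b 1) * e3
  -- differentiability of the barycentric coordinates
  have hfd_lam : ∀ i, HasFDerivAt (fun y => lam i y)
      (InnerProductSpace.toDual ℝ (EuclideanSpace ℝ (Fin 2)) (g i)) x := by
    intro i
    have hfun : (fun y => lam i y)
        = fun y => (LinearMap.toContinuousLinearMap (lam i).linear) y + lam i 0 := by
      funext y
      rw [AffineMap.decomp (lam i)]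
      simp
    have hd : HasFDerivAt (fun y => lam i y)
        (LinearMap.toContinuousLinearMap (lam i).linear) x := by
      rw [hfun]
      exact (LinearMap.toContinuousLinearMap (lam i).linear).hasFDerivAt.add_const _
    have hga := hd.differentiableAt.hasGradientAt
    rw [hg i x] at hga
    exact hga.hasFDerivAt
  -- derivative constraints from the barycentric identities
  have hS0 : (∑ i : Fin 3, InnerProductSpace.toDual ℝ (EuclideanSpace ℝ (Fin 2)) (g i)) = 0 := by
    have ha : HasFDerivAt (fun y : (EuclideanSpace ℝ (Fin 2)) => ∑ i : Fin 3, lam i y)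
        (∑ i : Fin 3, InnerProductSpace.toDual ℝ (EuclideanSpace ℝ (Fin 2)) (g i)) x :=
      HasFDerivAt.fun_sum fun i _ => hfd_lam i
    have hb : HasFDerivAt (fun _ : (EuclideanSpace ℝ (Fin 2)) => (1 : ℝ)) (0 : (EuclideanSpace ℝ (Fin 2)) →L[ℝ] ℝ) x := hasFDerivAt_const 1 x
    rw [show (fun y : (EuclideanSpace ℝ (Fin 2)) => ∑ i : Fin 3, lam i y) = fun _ => (1 : ℝ) from funext h1] at ha
    exact ha.unique hb
  have hSk : ∀ k : Fin 2, (∑ i : Fin 3, a i k • InnerProductSpace.toDual ℝ (EuclideanSpace ℝ (Fin 2)) (g i))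
      = (EuclideanSpace.proj k : (EuclideanSpace ℝ (Fin 2)) →L[ℝ] ℝ) := by
    intro k
    have ha : HasFDerivAt (fun y : (EuclideanSpace ℝ (Fin 2)) => ∑ i : Fin 3, lam i y * a i k)
        (∑ i : Fin 3, a i k • InnerProductSpace.toDual ℝ (EuclideanSpace ℝ (Fin 2)) (g i)) x :=
      HasFDerivAt.fun_sum fun i _ => (hfd_lam i).mul_const _
    have hb : HasFDerivAt (fun y : (EuclideanSpace ℝ (Fin 2)) => y k) (EuclideanSpace.proj k : (EuclideanSpace ℝ (Fin 2)) →L[ℝ] ℝ) x :=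
      (EuclideanSpace.proj k : (EuclideanSpace ℝ (Fin 2)) →L[ℝ] ℝ).hasFDerivAt
    rw [show (fun y : (EuclideanSpace ℝ (Fin 2)) => ∑ i : Fin 3, lam i y * a i k) = fun y => y k from
      funext fun y => h2 y k] at ha
    exact ha.unique hb
  -- derivative of the quadratic form
  have hQ : HasFDerivAt (fun y : (EuclideanSpace ℝ (Fin 2)) => matBilin H y y)
      (∑ i : Fin 2, ∑ j : Fin 2,
        ((x i * H i j) • (EuclideanSpace.proj j : (EuclideanSpace ℝ (Fin 2)) →L[ℝ] ℝ)
          + x j • (H i j • (EuclideanSpace.proj i : (EuclideanSpace ℝ (Fin 2)) →L[ℝ] ℝ)))) x := by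
    simp only [matBilin]
    refine HasFDerivAt.fun_sum fun i _ => ?_
    refine HasFDerivAt.fun_sum fun j _ => ?_
    exact ((EuclideanSpace.proj i : (EuclideanSpace ℝ (Fin 2)) →L[ℝ] ℝ).hasFDerivAt.mul_const (H i j)).mul
      (EuclideanSpace.proj j : (EuclideanSpace ℝ (Fin 2)) →L[ℝ] ℝ).hasFDerivAt
  -- assemble
  rw [show (fun y => u y - uI y)
      = fun y => (1 / 2 : ℝ) * matBilin H y y - (1 / 2 : ℝ) * ∑ i : Fin 3, lam i y * B i from
    funext hkey]
  refine HasGradientAt.gradient ?_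
  rw [hasGradientAt_iff_hasFDerivAt]
  have hsum : HasFDerivAt (fun y : (EuclideanSpace ℝ (Fin 2)) => ∑ i : Fin 3, lam i y * B i)
      (∑ i : Fin 3, B i • InnerProductSpace.toDual ℝ (EuclideanSpace ℝ (Fin 2)) (g i)) x :=
    HasFDerivAt.fun_sum fun i _ => (hfd_lam i).mul_const _
  have htot := (hQ.const_mul (1 / 2 : ℝ)).sub (hsum.const_mul (1 / 2 : ℝ))
  refine htot.congr_fderiv ?_
  ext h
  have e0 := DFunLike.congr_fun hS0 h
  have e1 := DFunLike.congr_fun (hSk 0) h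
  have e2 := DFunLike.congr_fun (hSk 1) h
  simp only [ContinuousLinearMap.sum_apply, ContinuousLinearMap.smul_apply,
    ContinuousLinearMap.add_apply, ContinuousLinearMap.zero_apply,
    InnerProductSpace.toDual_apply_apply, smul_eq_mul,
    PiLp.proj_apply, Fin.sum_univ_three] at e0 e1 e2
  simp only [ContinuousLinearMap.coe_sub', Pi.sub_apply, ContinuousLinearMap.smul_apply,
    ContinuousLinearMap.sum_apply, ContinuousLinearMap.add_apply,
    InnerProductSpace.toDual_apply_apply, smul_eq_mul, PiLp.proj_apply,
    real_inner_smul_left, sum_inner, inner_add_left, Fin.sum_univ_three, Fin.sum_univ_two,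
    hB, matBilin, PiLp.sub_apply]
  linear_combination
    ((1 / 2 : ℝ) * (x 0 * H 0 0 * x 0 + x 0 * H 0 1 * x 1 + x 1 * H 1 0 * x 0
        + x 1 * H 1 1 * x 1)) * e0
    + (-(1 / 2 : ℝ) * ((H 0 0 * x 0 + H 0 1 * x 1) + (x 0 * H 0 0 + x 1 * H 1 0))) * e1
    + (-(1 / 2 : ℝ) * ((H 1 0 * x 0 + H 1 1 * x 1) + (x 0 * H 0 1 + x 1 * H 1 1))) * e2
end

section
/- Let K ⊂ ℝ² be a nondegenerate triangle with vertices a₁, a₂, a₃ and barycentric coordinate functions λ₁, λ₂, λ₃, and let H be a symmetric real 2×2 matrix. Then the vector field F : ℝ² → ℝ² defined by F(x) = Σ_{i=1}^{3} ∇λ_i · [(x − a_i) · (H(x − a_i))] is affine (each component of F is a polynomial of degree at most 1 in x); consequently x ↦ |F(x)|² is a polynomial of total degree at most 2. -/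
/-- The linear functional `v ↦ -(matBilin H v w + matBilin H w v)`. -/
noncomputable def matBilinL (H : Matrix (Fin 2) (Fin 2) ℝ) (w : EuclideanSpace ℝ (Fin 2)) :
    EuclideanSpace ℝ (Fin 2) →ₗ[ℝ] ℝ where
  toFun v := -(matBilin H v w + matBilin H w v)
  map_add' u v := by simp [matBilin, PiLp.add_apply, Fin.sum_univ_two]; ring
  map_smul' c v := by simp [matBilin, PiLp.smul_apply, Fin.sum_univ_two, smul_eq_mul]; ring

lemma euclid_sum_apply (f : Fin 3 → EuclideanSpace ℝ (Fin 2)) (j : Fin 2) :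
    (∑ i, f i) j = ∑ i, f i j := by
  simp [Fin.sum_univ_three, PiLp.add_apply]

/-- The vector field `F(x) = Σᵢ [(x − aᵢ) · H (x − aᵢ)] ∇λᵢ` built from the barycentric
coordinates of a nondegenerate triangle is affine, and consequently `x ↦ |F(x)|²` is a
polynomial of total degree at most `2`. -/
theorem vector_field_affine_and_norm_sq_quadratic
    (a : Fin 3 → EuclideanSpace ℝ (Fin 2))
    (hind : AffineIndependent ℝ a)
    (lam : Fin 3 → (EuclideanSpace ℝ (Fin 2) →ᵃ[ℝ] ℝ))
    (hlam : ∀ i j, lam i (a j) = if i = j then 1 else 0)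
    (g : Fin 3 → EuclideanSpace ℝ (Fin 2))
    (hg : ∀ i x, gradient (fun y => lam i y) x = g i)
    (H : Matrix (Fin 2) (Fin 2) ℝ) (hH : H.IsSymm)
    (F : EuclideanSpace ℝ (Fin 2) → EuclideanSpace ℝ (Fin 2))
    (hF : ∀ x, F x = ∑ i : Fin 3, matBilin H (x - a i) (x - a i) • g i) :
    (∃ G : EuclideanSpace ℝ (Fin 2) →ᵃ[ℝ] EuclideanSpace ℝ (Fin 2), ∀ x, F x = G x) ∧
      ∃ P : MvPolynomial (Fin 2) ℝ, P.totalDegree ≤ 2 ∧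
        ∀ x, ‖F x‖ ^ 2 = MvPolynomial.eval (fun j => x j) P := by
  -- Step 1: the coordinates sum to 1 everywhere
  have hone : ∀ x, ∑ i : Fin 3, lam i x = 1 := by
    have htop : affineSpan ℝ (Set.range a) = ⊤ := by
      rw [hind.affineSpan_eq_top_iff_card_eq_finrank_add_one]
      simp [finrank_euclideanSpace]
    set b : AffineBasis (Fin 3) ℝ (EuclideanSpace ℝ (Fin 2)) := ⟨a, hind, htop⟩ with hb
    have hcoe : ⇑b = a := rfl
    intro x
    have hw : ∑ i, b.coord i x = 1 := b.sum_coord_apply_eq_one x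
    have hlb : ∀ i, lam i x = b.coord i x := by
      intro i
      conv_lhs => rw [← b.affineCombination_coord_eq_self x, hcoe]
      rw [Finset.map_affineCombination _ _ _ (by simp [hw])]
      rw [Finset.affineCombination_eq_linear_combination _ _ _ (by simp [hw])]
      simp [Function.comp, hlam, ite_mul, Finset.sum_ite_eq]
    simp [hlb, hw]
  -- Step 2: `g i` represents the linear part of `lam i`
  have hlin : ∀ i (v : EuclideanSpace ℝ (Fin 2)), (inner ℝ (g i) v : ℝ) = (lam i).linear v := by
    intro i v
    have hfun : (fun y => lam i y) = fun y => (lam i).linear y + lam i 0 := by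
      funext y
      conv_lhs => rw [show ⇑(lam i) = _ from AffineMap.decomp (lam i)]
      rfl
    have hL : HasFDerivAt (fun y => lam i y)
        (LinearMap.toContinuousLinearMap (lam i).linear) 0 := by
      rw [hfun]
      exact (LinearMap.toContinuousLinearMap (lam i).linear).hasFDerivAt.add_const _
    have hgi : g i = (InnerProductSpace.toDual ℝ (EuclideanSpace ℝ (Fin 2))).symm
        (LinearMap.toContinuousLinearMap (lam i).linear) := by
      rw [← hg i 0]
      show (InnerProductSpace.toDual ℝ (EuclideanSpace ℝ (Fin 2))).symm (fderiv ℝ (fun y => lam i y) 0) = _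
      rw [hL.fderiv]
    rw [hgi, ← InnerProductSpace.toDual_apply_apply, LinearIsometryEquiv.apply_symm_apply]
    simp
  -- Step 3: the gradients sum to zero
  have hgsum : ∑ i : Fin 3, g i = 0 := by
    have hv : ∀ v : EuclideanSpace ℝ (Fin 2), (inner ℝ (∑ i : Fin 3, g i) v : ℝ) = 0 := by
      intro v
      rw [sum_inner]
      have : ∀ i : Fin 3, (inner ℝ (g i) v : ℝ) = lam i v - lam i 0 := by
        intro i
        rw [hlin i v]
        have hd : lam i v = (lam i).linear v + lam i 0 := by
          conv_lhs => rw [show ⇑(lam i) = _ from AffineMap.decomp (lam i)]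
          rfl
        linarith
      rw [Finset.sum_congr rfl fun i _ => this i, Finset.sum_sub_distrib, hone, hone, sub_self]
    have := hv (∑ i : Fin 3, g i)
    rwa [inner_self_eq_zero] at this
  -- Step 4: the affine structure
  set Lmap : EuclideanSpace ℝ (Fin 2) →ₗ[ℝ] EuclideanSpace ℝ (Fin 2) := ∑ i : Fin 3, (matBilinL H (a i)).smulRight (g i) with hLmap
  set c : EuclideanSpace ℝ (Fin 2) := ∑ i : Fin 3, matBilin H (a i) (a i) • g i with hc
  have key : ∀ x, F x = Lmap x + c := by
    intro x
    rw [hF]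
    have harith : ∀ i : Fin 3, matBilin H (x - a i) (x - a i) • g i
        = matBilin H x x • g i + (matBilinL H (a i) x • g i
          + matBilin H (a i) (a i) • g i) := by
      intro i
      have : matBilin H (x - a i) (x - a i)
          = matBilin H x x + (matBilinL H (a i) x + matBilin H (a i) (a i)) := by
        simp [matBilin, matBilinL, PiLp.sub_apply, Fin.sum_univ_two]
        ring
      rw [this, add_smul, add_smul]
    rw [Finset.sum_congr rfl fun i _ => harith i, Finset.sum_add_distrib,
      Finset.sum_add_distrib, ← Finset.smul_sum, hgsum, smul_zero, zero_add]
    congr 1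
  refine ⟨⟨Lmap.toAffineMap + AffineMap.const ℝ (EuclideanSpace ℝ (Fin 2)) c, fun x => by
    simp [key x, AffineMap.coe_add, AffineMap.coe_const]⟩, ?_⟩
  -- Step 5: coordinates of F are affine functions of the coordinates of x
  set M : Fin 2 → Fin 2 → ℝ := fun j k => ∑ i : Fin 3,
    (-(H k 0 * a i 0 + H k 1 * a i 1 + a i 0 * H 0 k + a i 1 * H 1 k)) * g i j with hM
  have hcoord : ∀ (x : EuclideanSpace ℝ (Fin 2)) (j : Fin 2), F x j = c j + M j 0 * x 0 + M j 1 * x 1 := by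
    intro x j
    rw [key x]
    have h1 : (Lmap x + c) j = Lmap x j + c j := rfl
    rw [h1]
    have h2 : Lmap x j = ∑ i : Fin 3, matBilinL H (a i) x * g i j := by
      rw [hLmap, LinearMap.sum_apply, euclid_sum_apply]
      refine Finset.sum_congr rfl fun i _ => ?_
      rw [LinearMap.smulRight_apply, PiLp.smul_apply, smul_eq_mul]
    have h3 : c j = ∑ i : Fin 3, matBilin H (a i) (a i) * g i j := by
      rw [hc, euclid_sum_apply]
      refine Finset.sum_congr rfl fun i _ => ?_
      rw [PiLp.smul_apply, smul_eq_mul]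
    rw [h2, h3, hM]
    simp only [matBilinL, matBilin, LinearMap.coe_mk, AddHom.coe_mk, Fin.sum_univ_two,
      Fin.sum_univ_three]
    ring
  -- Step 6: the polynomial
  set P : MvPolynomial (Fin 2) ℝ :=
    (MvPolynomial.C (c 0) + MvPolynomial.C (M 0 0) * MvPolynomial.X 0
      + MvPolynomial.C (M 0 1) * MvPolynomial.X 1) ^ 2
    + (MvPolynomial.C (c 1) + MvPolynomial.C (M 1 0) * MvPolynomial.X 0
      + MvPolynomial.C (M 1 1) * MvPolynomial.X 1) ^ 2 with hP
  have hdeg1 : ∀ (u v w : ℝ), (MvPolynomial.C u + MvPolynomial.C v * MvPolynomial.X 0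
      + MvPolynomial.C w * MvPolynomial.X 1 : MvPolynomial (Fin 2) ℝ).totalDegree ≤ 1 := by
    intro u v w
    refine (MvPolynomial.totalDegree_add _ _).trans (max_le ?_ ?_)
    · refine (MvPolynomial.totalDegree_add _ _).trans (max_le ?_ ?_)
      · simp [MvPolynomial.totalDegree_C]
      · refine (MvPolynomial.totalDegree_mul _ _).trans ?_
        simp [MvPolynomial.totalDegree_C, MvPolynomial.totalDegree_X]
    · refine (MvPolynomial.totalDegree_mul _ _).trans ?_
      simp [MvPolynomial.totalDegree_C, MvPolynomial.totalDegree_X]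
  refine ⟨P, ?_, ?_⟩
  · rw [hP]
    refine (MvPolynomial.totalDegree_add _ _).trans (max_le ?_ ?_)
    · refine (MvPolynomial.totalDegree_pow _ _).trans ?_
      have h := hdeg1 (c 0) (M 0 0) (M 0 1)
      omega
    · refine (MvPolynomial.totalDegree_pow _ _).trans ?_
      have h := hdeg1 (c 1) (M 1 0) (M 1 1)
      omega
  · intro x
    have hnorm : ‖F x‖ ^ 2 = (F x 0) ^ 2 + (F x 1) ^ 2 := by
      rw [EuclideanSpace.norm_eq, Real.sq_sqrt (by positivity)]
      simp [Fin.sum_univ_two, Real.norm_eq_abs, sq_abs]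
    rw [hnorm, hcoord x 0, hcoord x 1, hP]
    simp only [map_add, map_mul, map_pow, MvPolynomial.eval_C, MvPolynomial.eval_X]
end

section
/- Let K ⊂ ℝ² be a nondegenerate triangle with vertices a₁, a₂, a₃, area |K|, and edge vectors ℓ₁ = a₃ − a₂, ℓ₂ = a₁ − a₃, ℓ₃ = a₂ − a₁. Let u : ℝ² → ℝ be a quadratic polynomial with constant Hessian H, u_I its linear interpolant at the vertices, and d_i = ℓ_i · (H ℓ_i). Then ∫_K (u − u_I)(x) dx = −(|K|/24) · (d₁ + d₂ + d₃). -/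
open MeasureTheory RealInnerProductSpace

-- Auxiliary lemmas
open MeasureTheory

lemma intv (A B C : ℝ) (f : ℝ → ℝ) (a : ℝ) (hf : ∀ y, f y = A + B*y + C*y^2) :
    ∫ y in (0:ℝ)..a, f y = A*a + B*a^2/2 + C*a^3/3 := by
  have h : ∀ y ∈ Set.uIcc (0:ℝ) a,
      HasDerivAt (fun y => A*y + B*y^2/2 + C*y^3/3) (f y) y := by
    intro y _
    rw [hf]
    have h1 : HasDerivAt (fun y : ℝ => A*y + B*y^2/2 + C*y^3/3)
        (A*1 + B*(2*y^1)/2 + C*(3*y^2)/3) y := by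
      exact (((hasDerivAt_id y).const_mul A).add
        (((hasDerivAt_pow 2 y).const_mul B).div_const 2)).add
        (((hasDerivAt_pow 3 y).const_mul C).div_const 3)
    convert h1 using 1; ring
  have hi : IntervalIntegrable f volume 0 a := by
    have : f = fun y => A + B*y + C*y^2 := funext hf
    rw [this]; apply Continuous.intervalIntegrable; continuity
  rw [intervalIntegral.integral_eq_sub_of_hasDerivAt h hi]; ring

lemma int01 (A B C D : ℝ) (f : ℝ → ℝ) (hf : ∀ y, f y = A + B*y + C*y^2 + D*y^3) :
    ∫ y in (0:ℝ)..1, f y = A + B/2 + C/3 + D/4 := by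
  have h : ∀ y ∈ Set.uIcc (0:ℝ) 1,
      HasDerivAt (fun y => A*y + B*y^2/2 + C*y^3/3 + D*y^4/4) (f y) y := by
    intro y _
    rw [hf]
    have h1 : HasDerivAt (fun y : ℝ => A*y + B*y^2/2 + C*y^3/3 + D*y^4/4)
        (A*1 + B*(2*y^1)/2 + C*(3*y^2)/3 + D*(4*y^3)/4) y := by
      exact ((((hasDerivAt_id y).const_mul A).add
        (((hasDerivAt_pow 2 y).const_mul B).div_const 2)).add
        (((hasDerivAt_pow 3 y).const_mul C).div_const 3)).add
        (((hasDerivAt_pow 4 y).const_mul D).div_const 4)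
    convert h1 using 1; ring
  have hi : IntervalIntegrable f volume 0 1 := by
    have : f = fun y => A + B*y + C*y^2 + D*y^3 := funext hf
    rw [this]; apply Continuous.intervalIntegrable; continuity
  rw [intervalIntegral.integral_eq_sub_of_hasDerivAt h hi]; ring

def triS : Set (ℝ × ℝ) := {p | 0 ≤ p.1 ∧ 0 ≤ p.2 ∧ p.1 + p.2 ≤ 1}

lemma triS_closed : IsClosed triS := by
  have h1 : IsClosed {p : ℝ × ℝ | 0 ≤ p.1} := isClosed_le continuous_const continuous_fst
  have h2 : IsClosed {p : ℝ × ℝ | 0 ≤ p.2} := isClosed_le continuous_const continuous_snd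
  have h3 : IsClosed {p : ℝ × ℝ | p.1 + p.2 ≤ 1} :=
    isClosed_le (continuous_fst.add continuous_snd) continuous_const
  exact (h1.inter (h2.inter h3)).mono (by rfl) |>.mono (le_refl _) |>.mono (le_refl _)

lemma triS_meas : MeasurableSet triS := triS_closed.measurableSet

lemma triS_compact : IsCompact triS := by
  apply IsCompact.of_isClosed_subset (isCompact_Icc (a := ((0:ℝ),(0:ℝ))) (b := (1,1))) triS_closed
  rintro ⟨x, y⟩ ⟨h1, h2, h3⟩
  constructor <;> constructor <;> simp_all <;> linarith

lemma tri (c0 c1 c2 c3 c4 c5 : ℝ) (f : ℝ × ℝ → ℝ)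
    (hf : ∀ p, f p = c0 + c1*p.1 + c2*p.2 + c3*p.1^2 + c4*(p.1*p.2) + c5*p.2^2) :
    ∫ p in triS, f p = c0/2 + c1/6 + c2/6 + c3/12 + c4/24 + c5/12 := by
  have hfc : Continuous f := by
    have : f = fun p => c0 + c1*p.1 + c2*p.2 + c3*p.1^2 + c4*(p.1*p.2) + c5*p.2^2 :=
      funext hf
    rw [this]; continuity
  have hint : IntegrableOn f triS volume :=
    hfc.continuousOn.integrableOn_compact triS_compact
  have hind : Integrable (triS.indicator f) volume :=
    (integrable_indicator_iff triS_meas).2 hint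
  rw [← integral_indicator triS_meas]
  rw [MeasureTheory.Measure.volume_eq_prod] at hind ⊢
  rw [integral_prod _ hind]
  -- inner integral
  have hinner : ∀ x : ℝ, (∫ y, triS.indicator f (x, y)) =
      Set.indicator (Set.Icc (0:ℝ) 1) (fun x =>
        (c0 + c1*x + c3*x^2) * (1-x) + (c2 + c4*x)*((1-x)^2/2) + c5*((1-x)^3/3)) x := by
    intro x
    by_cases hx : x ∈ Set.Icc (0:ℝ) 1
    · obtain ⟨hx0, hx1⟩ := hx
      have hfun : (fun y => triS.indicator f (x, y)) =
          (Set.Icc (0:ℝ) (1-x)).indicator (fun y => f (x, y)) := by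
        funext y
        by_cases hy : y ∈ Set.Icc (0:ℝ) (1-x)
        · obtain ⟨hy0, hy1⟩ := hy
          rw [Set.indicator_of_mem (show (x,y) ∈ triS from ⟨hx0, hy0, by linarith⟩),
            Set.indicator_of_mem (Set.mem_Icc.mpr ⟨hy0, hy1⟩)]
        · rw [Set.indicator_of_notMem, Set.indicator_of_notMem hy]
          intro hmem
          obtain ⟨_, h2, h3⟩ := hmem
          exact hy ⟨h2, by linarith⟩
      rw [hfun, integral_indicator measurableSet_Icc,
        integral_Icc_eq_integral_Ioc, ← intervalIntegral.integral_of_le (by linarith)]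
      rw [intv (c0 + c1*x + c3*x^2) (c2 + c4*x) c5 (fun y => f (x, y)) (1-x)
        (fun y => by show f (x,y) = _; rw [hf]; ring)]
      rw [Set.indicator_of_mem (Set.mem_Icc.mpr ⟨hx0, hx1⟩)]
      ring
    · have hfun : (fun y => triS.indicator f (x, y)) = fun _ => (0:ℝ) := by
        funext y
        rw [Set.indicator_of_notMem]
        intro hmem
        obtain ⟨h1, h2, h3⟩ := hmem
        simp only [Set.mem_Icc, not_and_or, not_le] at hx
        rcases hx with h | h
        · exact absurd h1 (not_le.2 h)
        · linarith
      rw [hfun, integral_zero, Set.indicator_of_notMem hx]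
  simp only [hinner]
  rw [integral_indicator measurableSet_Icc, integral_Icc_eq_integral_Ioc,
    ← intervalIntegral.integral_of_le (by norm_num : (0:ℝ) ≤ 1)]
  rw [int01 (c0 + c2/2 + c5/3) (c1 - c0 - c2 + c4/2 - c5) (c3 - c1 + c2/2 - c4 + c5)
    (c4/2 - c3 - c5/3) _ (fun x => by ring)]
  ring

set_option maxHeartbeats 2000000 in
/-- Integral of the interpolation error: for a quadratic `u` with constant Hessian `H`
and its linear interpolant `u_I` on a nondegenerate triangle `K`, with
`dᵢ = ℓᵢ · (H ℓᵢ)`, one has `∫_K (u − u_I) = −(|K|/24)(d₁ + d₂ + d₃)`. -/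
theorem integral_interp_error
    (a : Fin 3 → EuclideanSpace ℝ (Fin 2))
    (hind : AffineIndependent ℝ a)
    (K : Set (EuclideanSpace ℝ (Fin 2)))
    (hK : K = convexHull ℝ (Set.range a))
    (H : Matrix (Fin 2) (Fin 2) ℝ) (hH : H.IsSymm)
    (b : EuclideanSpace ℝ (Fin 2)) (c : ℝ)
    (u : EuclideanSpace ℝ (Fin 2) → ℝ)
    (hu : ∀ x, u x = (1 / 2) * matBilin H x x + ⟪b, x⟫ + c)
    (uI : EuclideanSpace ℝ (Fin 2) →ᵃ[ℝ] ℝ)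
    (hI : ∀ i, uI (a i) = u (a i))
    (ℓ : Fin 3 → EuclideanSpace ℝ (Fin 2))
    (hℓ : ∀ i, ℓ i = a (i + 2) - a (i + 1))
    (d : Fin 3 → ℝ)
    (hd : ∀ i, d i = matBilin H (ℓ i) (ℓ i)) :
    ∫ x in K, (u x - uI x) =
      -((volume K).toReal / 24) * (d 0 + d 1 + d 2) := by
  classical
  set v : EuclideanSpace ℝ (Fin 2) := a 1 - a 0 with hv
  set w : EuclideanSpace ℝ (Fin 2) := a 2 - a 0 with hw
  -- linear independence of v, w
  have hli : ∀ cc dd : ℝ, cc • v + dd • w = 0 → cc = 0 ∧ dd = 0 := by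
    intro cc dd hcd
    rw [affineIndependent_iff_linearIndependent_vsub ℝ a 0] at hind
    have hsum : ∑ i : {x : Fin 3 // x ≠ 0},
        (fun i : {x : Fin 3 // x ≠ 0} => if (i : Fin 3) = 1 then cc else dd) i
          • (a (i : Fin 3) -ᵥ a 0) = 0 := by
      rw [← Finset.sum_subtype ({1, 2} : Finset (Fin 3)) (by decide)
          (fun x => (if x = 1 then cc else dd) • (a x -ᵥ a 0))]
      rw [Finset.sum_pair (by decide : (1 : Fin 3) ≠ 2)]
      simpa [vsub_eq_sub] using hcd
    have := Fintype.linearIndependent_iff.mp hind _ hsum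
    exact ⟨by simpa using this ⟨1, by decide⟩, by simpa using this ⟨2, by decide⟩⟩
  -- the linear map
  set Aₗ : EuclideanSpace ℝ (Fin 2) →ₗ[ℝ] EuclideanSpace ℝ (Fin 2) :=
    { toFun := fun y => y 0 • v + y 1 • w
      map_add' := by
        intro x y
        simp only [PiLp.add_apply, add_smul]
        abel
      map_smul' := by
        intro r x
        simp only [PiLp.smul_apply, smul_eq_mul, RingHom.id_apply, smul_add, smul_smul] } with hAl
  have hAapp : ∀ y, Aₗ y = y 0 • v + y 1 • w := fun y => rfl
  set A : EuclideanSpace ℝ (Fin 2) →L[ℝ] EuclideanSpace ℝ (Fin 2) :=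
    LinearMap.toContinuousLinearMap Aₗ with hA
  set φ : EuclideanSpace ℝ (Fin 2) → EuclideanSpace ℝ (Fin 2) :=
    fun y => a 0 + Aₗ y with hφ
  set ψ := ((MeasurableEquiv.toLp 2 (Fin 2 → ℝ)).symm).trans (MeasurableEquiv.finTwoArrow) with hψ
  have hψapp : ∀ y : EuclideanSpace ℝ (Fin 2), ψ y = (y 0, y 1) := fun y => rfl
  have hψmp : MeasurePreserving ψ volume volume :=
    (volume_preserving_finTwoArrow ℝ).comp
      (EuclideanSpace.volume_preserving_symm_measurableEquiv_toLp (Fin 2))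
  set T : Set (EuclideanSpace ℝ (Fin 2)) := ψ ⁻¹' triS with hT
  have hTmem : ∀ y : EuclideanSpace ℝ (Fin 2),
      y ∈ T ↔ (0 ≤ y 0 ∧ 0 ≤ y 1 ∧ y 0 + y 1 ≤ 1) := fun y => Iff.rfl
  have hTmeas : MeasurableSet T := ψ.measurable triS_meas
  -- vertices are images
  have hφ0 : φ 0 = a 0 := by
    simp [hφ, hAapp]
  have hE1 : φ (EuclideanSpace.single 0 1) = a 1 := by
    simp [hφ, hAapp, EuclideanSpace.single_apply, hv]
  have hE2 : φ (EuclideanSpace.single 1 1) = a 2 := by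
    simp [hφ, hAapp, EuclideanSpace.single_apply, hw]
  -- K = φ '' T
  have hconvT : Convex ℝ T := by
    intro x hx y hy p q hp hq hpq
    rw [hTmem] at hx hy ⊢
    obtain ⟨hx0, hx1, hx2⟩ := hx
    obtain ⟨hy0, hy1, hy2⟩ := hy
    simp only [PiLp.add_apply, PiLp.smul_apply, smul_eq_mul]
    refine ⟨by positivity, by positivity, ?_⟩
    nlinarith [mul_le_mul_of_nonneg_left hx2 hp, mul_le_mul_of_nonneg_left hy2 hq]
  have hKim : K = φ '' T := by
    apply le_antisymm
    · rw [hK]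
      apply convexHull_min
      · rintro x ⟨i, rfl⟩
        fin_cases i
        · exact ⟨0, by rw [hTmem]; norm_num, hφ0⟩
        · exact ⟨EuclideanSpace.single 0 1, by
            rw [hTmem]; simp [EuclideanSpace.single_apply], hE1⟩
        · exact ⟨EuclideanSpace.single 1 1, by
            rw [hTmem]; simp [EuclideanSpace.single_apply], hE2⟩
      · have : φ '' T = (fun z => a 0 + z) '' (Aₗ '' T) := by
          rw [Set.image_image]
        rw [this]
        exact (hconvT.linear_image Aₗ).translate (a 0)
    · rintro _ ⟨y, hy, rfl⟩
      rw [hK]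
      rw [hTmem] at hy
      obtain ⟨hy0, hy1, hy2⟩ := hy
      have hcm := Finset.centerMass_mem_convexHull (Finset.univ : Finset (Fin 3))
        (w := ![1 - y 0 - y 1, y 0, y 1]) (z := a) (s := Set.range a) ?_ ?_ ?_
      · convert hcm using 1
        rw [Finset.centerMass]
        simp only [Fin.sum_univ_three, Matrix.cons_val_zero, Matrix.cons_val_one,
          Matrix.head_cons, Matrix.cons_val_two, Matrix.tail_cons]
        rw [show (1 - y 0 - y 1 + y 0 + y 1 : ℝ) = 1 by ring]
        rw [inv_one, one_smul]
        show a 0 + Aₗ y = _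
        rw [hAapp, hv, hw]
        simp only [smul_sub, sub_smul, one_smul]
        abel
      · intro i _
        fin_cases i <;> simp <;> linarith
      · simp only [Fin.sum_univ_three, Matrix.cons_val_zero, Matrix.cons_val_one,
          Matrix.head_cons, Matrix.cons_val_two, Matrix.tail_cons]
        linarith
      · intro i _
        exact Set.mem_range_self i
  -- injectivity
  have hinj : Set.InjOn φ T := by
    intro y _ z _ hyz
    have hlin : Aₗ y = Aₗ z := by
      have : a 0 + Aₗ y = a 0 + Aₗ z := hyz
      exact add_left_cancel this
    have h' : y 0 • v + y 1 • w = z 0 • v + z 1 • w := by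
      rw [← hAapp, ← hAapp, hlin]
    have h2 : (y 0 - z 0) • v + (y 1 - z 1) • w =
        (y 0 • v + y 1 • w) - (z 0 • v + z 1 • w) := by
      rw [sub_smul, sub_smul]; abel
    obtain ⟨e0, e1⟩ := hli (y 0 - z 0) (y 1 - z 1) (by rw [h2, h', sub_self])
    ext i
    fin_cases i
    · exact sub_eq_zero.mp e0
    · exact sub_eq_zero.mp e1
  -- change of variables
  have hderiv : ∀ x ∈ T, HasFDerivWithinAt φ A T x := by
    intro x _
    exact ((A.hasFDerivAt).const_add (a 0)).hasFDerivWithinAt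
  have hchange : ∀ g : EuclideanSpace ℝ (Fin 2) → ℝ,
      ∫ x in K, g x = |A.det| • ∫ y in T, g (φ y) := by
    intro g
    rw [hKim, integral_image_eq_integral_abs_det_fderiv_smul volume hTmeas hderiv hinj g,
      integral_smul]
  -- volume computations
  have hvolTri : (volume triS).toReal = 1 / 2 := by
    have e1 : ∫ p in triS, (1 : ℝ) = 1 / 2 := by
      rw [tri 1 0 0 0 0 0 _ (fun p => by ring)]; norm_num
    have e2 : ∫ p in triS, (1 : ℝ) = (volume triS).toReal := by simp [Measure.real]
    linarith [e1, e2.symm]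
  have hvolT : (volume T).toReal = 1 / 2 := by
    rw [hT, hψmp.measure_preimage triS_meas.nullMeasurableSet, hvolTri]
  have hvolK : (volume K).toReal = |A.det| * (1 / 2) := by
    have e2 := hchange (fun _ => (1 : ℝ))
    have e1 : ∫ x in K, (1 : ℝ) = (volume K).toReal := by simp [Measure.real]
    have e3 : ∫ y in T, (1 : ℝ) = (volume T).toReal := by simp [Measure.real]
    rw [e1] at e2
    rw [e2]
    show |A.det| * _ = _
    rw [e3, hvolT]
  -- pointwise identity
  set al := matBilin H v v with hal
  set be := matBilin H v w with hbe
  set ga := matBilin H w w with hga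
  set g0 : ℝ × ℝ → ℝ := fun p =>
    0 + (-(al/2))*p.1 + (-(ga/2))*p.2 + (al/2)*p.1^2 + be*(p.1*p.2) + (ga/2)*p.2^2 with hg0
  have h01 : H 1 0 = H 0 1 := hH.apply 0 1
  have hlv : uI.linear v = u (a 1) - u (a 0) := by
    have h1 : v +ᵥ a 0 = a 1 := by rw [hv, vadd_eq_add]; abel
    have h2 := uI.map_vadd (a 0) v
    rw [h1, vadd_eq_add] at h2
    have := hI 0; have := hI 1; linarith
  have hlw : uI.linear w = u (a 2) - u (a 0) := by
    have h1 : w +ᵥ a 0 = a 2 := by rw [hw, vadd_eq_add]; abel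
    have h2 := uI.map_vadd (a 0) w
    rw [h1, vadd_eq_add] at h2
    have := hI 0; have := hI 2; linarith
  have huIφ : ∀ y : EuclideanSpace ℝ (Fin 2),
      uI (φ y) = u (a 0) + y 0 * (u (a 1) - u (a 0)) + y 1 * (u (a 2) - u (a 0)) := by
    intro y
    have hφy : φ y = (y 0 • v + y 1 • w) +ᵥ a 0 := by
      show a 0 + Aₗ y = _
      rw [hAapp, vadd_eq_add]; abel
    rw [hφy, AffineMap.map_vadd, map_add, _root_.map_smul, _root_.map_smul, hlv, hlw, vadd_eq_add,
      hI 0, smul_eq_mul, smul_eq_mul]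
    ring
  have hφyi : ∀ (y : EuclideanSpace ℝ (Fin 2)) (i : Fin 2),
      φ y i = a 0 i + (y 0 * v i + y 1 * w i) := by
    intro y i
    show (a 0 + Aₗ y) i = _
    rw [hAapp]
    simp [PiLp.add_apply, PiLp.smul_apply]
  have hmat : ∀ x y : EuclideanSpace ℝ (Fin 2), matBilin H x y =
      x 0 * H 0 0 * y 0 + x 0 * H 0 1 * y 1 + x 1 * H 1 0 * y 0 + x 1 * H 1 1 * y 1 := by
    intro x y
    simp [matBilin, Fin.sum_univ_two]
    ring
  have hinn : ∀ x y : EuclideanSpace ℝ (Fin 2), (inner ℝ x y : ℝ) = x 0 * y 0 + x 1 * y 1 := by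
    intro x y
    simp [PiLp.inner_apply, Fin.sum_univ_two]
    ring
  have hvi : ∀ i, v i = a 1 i - a 0 i := fun i => rfl
  have hwi : ∀ i, w i = a 2 i - a 0 i := fun i => rfl
  have hpt : ∀ y : EuclideanSpace ℝ (Fin 2), u (φ y) - uI (φ y) = g0 (y 0, y 1) := by
    intro y
    rw [huIφ y, hu (φ y), hu (a 0), hu (a 1), hu (a 2), hg0]
    simp only [hal, hbe, hga, hmat, hinn, hφyi, hvi, hwi]
    simp only [h01]
    ring
  -- transfer the integral
  have hTint : ∫ y in T, (u (φ y) - uI (φ y)) = ∫ p in triS, g0 p := by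
    have heq : (fun y : EuclideanSpace ℝ (Fin 2) => u (φ y) - uI (φ y)) =
        fun y => g0 (ψ y) := by
      funext y
      rw [hψapp]; exact hpt y
    calc ∫ y in T, (u (φ y) - uI (φ y)) = ∫ y in T, g0 (ψ y) := by rw [heq]
      _ = ∫ p in triS, g0 p := by
          rw [hT]
          exact hψmp.setIntegral_preimage_emb ψ.measurableEmbedding g0 triS
  have htri : ∫ p in triS, g0 p =
      0/2 + (-(al/2))/6 + (-(ga/2))/6 + (al/2)/12 + be/24 + (ga/2)/12 :=
    tri _ _ _ _ _ _ g0 (fun p => rfl)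
  -- final assembly
  have hLHS : ∫ x in K, (u x - uI x) =
      |A.det| * (0/2 + (-(al/2))/6 + (-(ga/2))/6 + (al/2)/12 + be/24 + (ga/2)/12) := by
    rw [hchange (fun x => u x - uI x)]
    rw [show (∫ y in T, (fun x => u x - uI x) (φ y)) = ∫ y in T, (u (φ y) - uI (φ y)) from rfl]
    rw [hTint, htri, smul_eq_mul]
  rw [hLHS, hvolK]
  rw [hd 0, hd 1, hd 2, hℓ 0, hℓ 1, hℓ 2]
  have hsub : ∀ (i j : Fin 3) (k : Fin 2), (a i - a j) k = a i k - a j k := fun _ _ _ => rfl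
  simp only [show (0+2 : Fin 3) = 2 from rfl, show (0+1 : Fin 3) = 1 from rfl,
    show (1+2 : Fin 3) = 0 from rfl, show (1+1 : Fin 3) = 2 from rfl,
    show (2+2 : Fin 3) = 1 from rfl, show (2+1 : Fin 3) = 0 from rfl]
  simp only [hal, hbe, hga, hmat, hvi, hwi, hsub]
  simp only [h01]
  ring
end
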